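/- arXiv:2002.12808 — 7 statements merged into one kernel-verified Lean document; each statement's English description precedes it below -/
import Mathlib

section
/- Let $a < b$ be real numbers, $n > 0$, and let $F : [a,b] \to \mathbb{R}$ be continuous with $F(a) = 0$. Then for every $x \in [a,b]$ the function $t \mapsto (x-t)^{n-1} F(t)$ is Lebesgue integrable on $(a,x)$, the function $J_a^n F(x) := \frac{1}{\Gamma(n)} \int_a^x (x-t)^{n-1} F(t)\,dt$ is continuous on $[a,b]$, and $J_a^n F(a) = 0$. (This is the transport, via the isometric isomorphism between the space $D_{HK}$ of Henstock–Kurzweil integrable distributions and $C_0 = \{F \in C[a,b] : F(a)=0\}$ sending a distribution to its continuous primitive, of the paper's Theorem that the Riemann–Liouville fractional integral operator $\mathcal{J}_a^n$ maps $D_{HK}$ into $D_{HK}$.) -/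
open MeasureTheory Set
open scoped Convolution

/-- The Riemann–Liouville fractional integral of order `n` based at `a`. -/
noncomputable def rlInt (a n : ℝ) (h : ℝ → ℝ) (x : ℝ) : ℝ :=
  (1 / Real.Gamma n) * ∫ t in a..x, (x - t) ^ (n - 1) * h t

theorem rl_integral_maps_C0_to_C0 (a b n : ℝ) (hab : a < b) (hn : 0 < n)
    (F : ℝ → ℝ) (hF : ContinuousOn F (Icc a b)) (hFa : F a = 0) :
    (∀ x ∈ Icc a b, IntegrableOn (fun t => (x - t) ^ (n - 1) * F t) (Ioo a x) volume) ∧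
    ContinuousOn (rlInt a n F) (Icc a b) ∧
    rlInt a n F a = 0 := by
  -- the kernel
  set k : ℝ → ℝ := (Ioi (0:ℝ)).indicator (fun u => u ^ (n - 1)) with hk
  -- the extension of F to a continuous compactly supported function
  set Ft : ℝ → ℝ := fun t => F (min (max t a) b) * max 0 (min 1 (b + 1 - t)) with hFt
  have hFtc : Continuous Ft := by
    apply Continuous.mul
    · apply hF.comp_continuous ((continuous_id.max continuous_const).min continuous_const)
      intro t
      simp only [mem_Icc]
      constructor
      · exact le_min (le_max_right _ _) hab.le
      · exact min_le_right _ _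
    · exact continuous_const.max (continuous_const.min (continuous_const.sub continuous_id))
  have hFtsupp : HasCompactSupport Ft := by
    apply HasCompactSupport.intro (isCompact_Icc (a := a) (b := b + 1))
    intro x hx
    rcases not_and_or.mp hx with h | h
    · push_neg at h
      have : min (max x a) b = a := by
        rw [max_eq_right h.le, min_eq_left hab.le]
      simp [hFt, this, hFa]
    · push_neg at h
      have : min 1 (b + 1 - x) ≤ b + 1 - x := min_le_right _ _
      have : max 0 (min 1 (b + 1 - x)) = 0 := by
        apply max_eq_left
        linarith
      simp [hFt, this]
  have hkloc : LocallyIntegrable k volume := by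
    rw [locallyIntegrable_iff]
    intro K hK
    obtain ⟨R, hR⟩ := hK.isBounded.subset_closedBall 0
    have h1 : IntegrableOn (fun u : ℝ => u ^ (n - 1)) (Ioc 0 (max R 1)) volume := by
      rw [← intervalIntegrable_iff_integrableOn_Ioc_of_le (by positivity)]
      exact intervalIntegral.intervalIntegrable_rpow' (by linarith)
    have h2 : IntegrableOn (fun u : ℝ => u ^ (n - 1)) (Ioi 0 ∩ K) volume := by
      apply h1.mono_set
      intro u hu
      refine ⟨hu.1, ?_⟩
      have := hR hu.2
      simp only [Metric.mem_closedBall, Real.dist_eq, sub_zero] at this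
      exact le_trans (le_abs_self u) (le_trans this (le_max_left _ _))
    rw [IntegrableOn, hk, integrable_indicator_iff measurableSet_Ioi,
      IntegrableOn, Measure.restrict_restrict measurableSet_Ioi]
    exact h2
  -- the key pointwise identity
  have key : ∀ x ∈ Icc a b, (fun t => Ft t * k (x - t)) =
      (Ioo a x).indicator (fun t => (x - t) ^ (n - 1) * F t) := by
    intro x hx
    funext t
    by_cases ht : t ∈ Ioo a x
    · rw [indicator_of_mem ht]
      obtain ⟨ht1, ht2⟩ := ht
      have htb : t ≤ b := le_trans ht2.le hx.2
      have h1 : min (max t a) b = t := by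
        rw [max_eq_left ht1.le, min_eq_left htb]
      have h2 : max 0 (min 1 (b + 1 - t)) = 1 := by
        rw [min_eq_left (by linarith), max_eq_right zero_le_one]
      have h3 : k (x - t) = (x - t) ^ (n - 1) :=
        indicator_of_mem (by simp [sub_pos.mpr ht2]) _
      simp [hFt, h1, h2, h3, mul_comm]
    · rw [indicator_of_notMem ht]
      rw [mem_Ioo, not_and_or, not_lt, not_lt] at ht
      rcases ht with h | h
      · have : min (max t a) b = a := by rw [max_eq_right h, min_eq_left hab.le]
        simp [hFt, this, hFa]
      · have : k (x - t) = 0 := indicator_of_notMem (by simp; linarith) _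
        simp [this]
  -- convolution exists and is continuous
  have hconvex : ConvolutionExists Ft k (ContinuousLinearMap.mul ℝ ℝ) volume :=
    hFtsupp.convolutionExists_left _ hFtc hkloc
  have hconvcont : Continuous (Ft ⋆[ContinuousLinearMap.mul ℝ ℝ] k) :=
    hFtsupp.continuous_convolution_left _ hFtc hkloc
  -- integrability
  have hint : ∀ x ∈ Icc a b, IntegrableOn (fun t => (x - t) ^ (n - 1) * F t) (Ioo a x) volume := by
    intro x hx
    have := hconvex x
    rw [ConvolutionExistsAt] at this
    simp only [ContinuousLinearMap.mul_apply'] at this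
    rw [key x hx] at this
    rwa [integrable_indicator_iff measurableSet_Ioo] at this
  refine ⟨hint, ?_, ?_⟩
  · -- continuity: rlInt agrees with the convolution on Icc a b
    have heq : EqOn (rlInt a n F)
        (fun x => (1 / Real.Gamma n) * (Ft ⋆[ContinuousLinearMap.mul ℝ ℝ] k) x) (Icc a b) := by
      intro x hx
      simp only [rlInt, convolution_def, ContinuousLinearMap.mul_apply']
      congr 1
      rw [intervalIntegral.integral_of_le hx.1, integral_Ioc_eq_integral_Ioo,
        ← integral_indicator measurableSet_Ioo, ← key x hx]
    exact (ContinuousOn.congr ((continuous_const.mul hconvcont).continuousOn) heq)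
  · simp [rlInt]
end

section
/- Let $a < b$ be real numbers, $n \ge 1$, and let $f \in L^1[a,b]$. Then for every $x \in [a,b]$, $\left| \frac{1}{\Gamma(n)} \int_a^x (x-t)^{n-1} f(t)\,dt \right| \le \frac{(x-a)^{n-1}}{\Gamma(n)} \sup_{y \in [a,x]} \left| \int_a^y f(t)\,dt \right|$. (This estimates the fractional integral $J_a^n f$ pointwise by the Alexiewicz norm $\|f\|_A = \sup_{y\in[a,b]} |\int_a^y f|$ of $f$, rather than by its $L^1$ norm; it is the quantitative content, for integrable functions, of the paper's Theorem that for $n \ge 1$ the operator $\mathcal{J}_a^n$ is bounded in the Alexiewicz norm.) -/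
open MeasureTheory Set

private lemma aux_K_intervalIntegrable {x p : ℝ} (hp : 0 < p) (a : ℝ) :
    IntervalIntegrable (fun s => p * (x - s) ^ (p - 1)) volume a x := by
  have h : IntervalIntegrable (fun u : ℝ => u ^ (p - 1)) volume (x - a) (x - x) :=
    intervalIntegral.intervalIntegrable_rpow' (by linarith)
  have h2 := h.comp_sub_left x
  simp only [sub_sub_cancel, sub_self, sub_zero] at h2
  exact h2.const_mul p

private lemma aux_K_integral {x p : ℝ} (hp : 0 < p) (t : ℝ) :
    ∫ s in t..x, p * (x - s) ^ (p - 1) = (x - t) ^ p := by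
  rw [intervalIntegral.integral_const_mul,
    intervalIntegral.integral_comp_sub_left (fun u : ℝ => u ^ (p - 1)) x, sub_self,
    integral_rpow (Or.inl (by linarith : (-1 : ℝ) < p - 1))]
  have h1 : p - 1 + 1 = p := by ring
  rw [h1, Real.zero_rpow hp.ne']
  field_simp
  rw [sub_zero]

private lemma key_identity {a x p : ℝ} (hp : 0 < p) (hax : a ≤ x) {f : ℝ → ℝ}
    (hf : IntegrableOn f (Ioc a x) volume) :
    ∫ t in a..x, (x - t) ^ p * f t
      = ∫ s in a..x, (p * (x - s) ^ (p - 1)) * ∫ t in a..s, f t := by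
  set K : ℝ → ℝ := fun s => p * (x - s) ^ (p - 1) with hKdef
  set ν : Measure ℝ := volume.restrict (Ioc a x) with hν
  have hK : Integrable K ν :=
    (intervalIntegrable_iff_integrableOn_Ioc_of_le hax).mp (aux_K_intervalIntegrable hp a)
  have hfν : Integrable f ν := hf
  have hmeas : MeasurableSet {q : ℝ × ℝ | q.1 < q.2} :=
    measurableSet_lt measurable_fst measurable_snd
  set H : ℝ × ℝ → ℝ := ({q : ℝ × ℝ | q.1 < q.2}).indicator (fun q => f q.1 * K q.2) with hHdef
  have hH : Integrable H (ν.prod ν) := (hfν.mul_prod hK).indicator hmeas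
  have swap : ∫ t, ∫ s, H (t, s) ∂ν ∂ν = ∫ s, ∫ t, H (t, s) ∂ν ∂ν :=
    MeasureTheory.integral_integral_swap hH
  have L1 : ∀ t ∈ Ioc a x, (∫ s, H (t, s) ∂ν) = f t * (x - t) ^ p := by
    intro t ht
    have ht1 : (fun s => H (t, s)) = fun s => f t * (Ioi t).indicator K s := by
      funext s
      by_cases h : t < s <;> simp [hHdef, Set.indicator_apply, h]
    rw [ht1, MeasureTheory.integral_const_mul, hν,
      MeasureTheory.integral_indicator measurableSet_Ioi,
      Measure.restrict_restrict measurableSet_Ioi]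
    have h2 : Ioi t ∩ Ioc a x = Ioc t x := by
      rw [Set.inter_comm, Set.Ioc_inter_Ioi, sup_eq_right.mpr ht.1.le]
    rw [h2, ← intervalIntegral.integral_of_le ht.2, hKdef, aux_K_integral hp]
  have R1 : ∀ s ∈ Ioc a x, (∫ t, H (t, s) ∂ν) = K s * ∫ t in a..s, f t := by
    intro s hs
    have hs1 : (fun t => H (t, s)) = fun t => (Iio s).indicator f t * K s := by
      funext t
      by_cases h : t < s <;> simp [hHdef, Set.indicator_apply, h]
    rw [hs1, MeasureTheory.integral_mul_const, hν,
      MeasureTheory.integral_indicator measurableSet_Iio,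
      Measure.restrict_restrict measurableSet_Iio]
    have h2 : Iio s ∩ Ioc a x = Ioo a s := by
      ext t
      simp only [Set.mem_inter_iff, Set.mem_Iio, Set.mem_Ioc, Set.mem_Ioo]
      constructor
      · rintro ⟨h1, h2, h3⟩; exact ⟨h2, h1⟩
      · rintro ⟨h1, h2⟩; exact ⟨h2, h1, le_trans h2.le hs.2⟩
    rw [h2, ← MeasureTheory.integral_Ioc_eq_integral_Ioo,
      ← intervalIntegral.integral_of_le hs.1.le, mul_comm]
  calc ∫ t in a..x, (x - t) ^ p * f t
      = ∫ t in Ioc a x, f t * (x - t) ^ p := by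
        rw [intervalIntegral.integral_of_le hax]
        exact setIntegral_congr_fun measurableSet_Ioc fun t _ => mul_comm _ _
    _ = ∫ t, ∫ s, H (t, s) ∂ν ∂ν :=
        (setIntegral_congr_fun measurableSet_Ioc fun t ht => L1 t ht).symm
    _ = ∫ s, ∫ t, H (t, s) ∂ν ∂ν := swap
    _ = ∫ s in Ioc a x, K s * ∫ t in a..s, f t :=
        setIntegral_congr_fun measurableSet_Ioc fun s hs => R1 s hs
    _ = ∫ s in a..x, (p * (x - s) ^ (p - 1)) * ∫ t in a..s, f t :=
        (intervalIntegral.integral_of_le hax).symm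

theorem rl_integral_alexiewicz_bound (a b n : ℝ) (hab : a < b) (hn : 1 ≤ n)
    (f : ℝ → ℝ) (hf : IntegrableOn f (Icc a b) volume) :
    ∀ x ∈ Icc a b,
      |rlInt a n f x| ≤
        (x - a) ^ (n - 1) / Real.Gamma n * ⨆ y : Icc a x, |∫ t in a..(y : ℝ), f t| := by
  intro x hx
  obtain ⟨hax, hxb⟩ := hx
  have hfx : IntegrableOn f (Ioc a x) volume :=
    hf.mono_set (subset_trans Ioc_subset_Icc_self (Icc_subset_Icc le_rfl hxb))
  have hbound : ∀ y ∈ Icc a x, |∫ t in a..y, f t| ≤ ∫ t in Ioc a x, |f t| := by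
    intro y hy
    calc |∫ t in a..y, f t| ≤ ∫ t in a..y, |f t| :=
          intervalIntegral.abs_integral_le_integral_abs hy.1
      _ = ∫ t in Ioc a y, |f t| := intervalIntegral.integral_of_le hy.1
      _ ≤ ∫ t in Ioc a x, |f t| :=
          setIntegral_mono_set hfx.abs (Filter.Eventually.of_forall fun t => abs_nonneg _)
            (HasSubset.Subset.eventuallyLE (Ioc_subset_Ioc le_rfl hy.2))
  have hbdd : BddAbove (Set.range fun y : Icc a x => |∫ t in a..(y : ℝ), f t|) := by
    refine ⟨∫ t in Ioc a x, |f t|, ?_⟩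
    rintro _ ⟨y, rfl⟩
    exact hbound y y.2
  have hFC : ∀ y ∈ Icc a x,
      |∫ t in a..y, f t| ≤ ⨆ y : Icc a x, |∫ t in a..(y : ℝ), f t| :=
    fun y hy => le_ciSup hbdd (⟨y, hy⟩ : Icc a x)
  have hC0 : 0 ≤ ⨆ y : Icc a x, |∫ t in a..(y : ℝ), f t| :=
    le_trans (abs_nonneg _) (hFC a ⟨le_rfl, hax⟩)
  have hΓ : 0 < Real.Gamma n := Real.Gamma_pos_of_pos (by linarith)
  rcases eq_or_lt_of_le hn with h1 | h1
  · -- n = 1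
    subst h1
    simp only [rlInt, Real.Gamma_one, sub_self, Real.rpow_zero, one_mul, div_one]
    exact hFC x ⟨hax, le_rfl⟩
  · -- n > 1
    have hp : 0 < n - 1 := by linarith
    rcases eq_or_lt_of_le hax with h2 | h2
    · -- x = a
      subst h2
      simp only [rlInt, intervalIntegral.integral_same, mul_zero, abs_zero]
      exact mul_nonneg (div_nonneg (Real.rpow_nonneg (by linarith) _) hΓ.le) hC0
    · have hid := key_identity hp hax hfx
      have hKi : IntervalIntegrable (fun s => (n - 1) * (x - s) ^ (n - 1 - 1)) volume a x :=
        aux_K_intervalIntegrable hp a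
      have hFcont : ContinuousOn (fun y => ∫ t in a..y, f t) (uIcc a x) :=
        intervalIntegral.continuousOn_primitive_interval
          (by rw [uIcc_of_le hax]
              exact hf.mono_set (Icc_subset_Icc le_rfl hxb))
      have hI1 : IntervalIntegrable
          (fun s => ((n - 1) * (x - s) ^ (n - 1 - 1)) * ∫ t in a..s, f t) volume a x :=
        hKi.mul_continuousOn hFcont
      have step1 : |∫ s in a..x, ((n - 1) * (x - s) ^ (n - 1 - 1)) * ∫ t in a..s, f t|
          ≤ ∫ s in a..x, ((n - 1) * (x - s) ^ (n - 1 - 1)) *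
              ⨆ y : Icc a x, |∫ t in a..(y : ℝ), f t| := by
        refine (intervalIntegral.abs_integral_le_integral_abs hax).trans ?_
        refine intervalIntegral.integral_mono_on hax hI1.abs (hKi.mul_const _) ?_
        intro s hs
        have hxs : (0 : ℝ) ≤ x - s := by linarith [hs.2]
        have hK0 : 0 ≤ (n - 1) * (x - s) ^ (n - 1 - 1) :=
          mul_nonneg hp.le (Real.rpow_nonneg hxs _)
        rw [abs_mul, abs_of_nonneg hK0]
        exact mul_le_mul_of_nonneg_left (hFC s hs) hK0
      have step2 : (∫ s in a..x, ((n - 1) * (x - s) ^ (n - 1 - 1)) *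
            ⨆ y : Icc a x, |∫ t in a..(y : ℝ), f t|)
          = (x - a) ^ (n - 1) * ⨆ y : Icc a x, |∫ t in a..(y : ℝ), f t| := by
        rw [intervalIntegral.integral_mul_const, aux_K_integral hp]
      have hΓ' : (0 : ℝ) ≤ 1 / Real.Gamma n := by positivity
      calc |rlInt a n f x|
          = (1 / Real.Gamma n) *
              |∫ s in a..x, ((n - 1) * (x - s) ^ (n - 1 - 1)) * ∫ t in a..s, f t| := by
            rw [rlInt, hid, abs_mul, abs_of_nonneg hΓ']
        _ ≤ (1 / Real.Gamma n) *
              ((x - a) ^ (n - 1) * ⨆ y : Icc a x, |∫ t in a..(y : ℝ), f t|) :=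
            mul_le_mul_of_nonneg_left (step1.trans (le_of_eq step2)) hΓ'
        _ = (x - a) ^ (n - 1) / Real.Gamma n *
              ⨆ y : Icc a x, |∫ t in a..(y : ℝ), f t| := by ring
end

section
/- Let $a < b$ be real numbers and $n > 0$. If $(F_k)$ is a sequence of continuous functions on $[a,b]$ converging uniformly on $[a,b]$ to a continuous function $F$, then $(J_a^n F_k)$ converges uniformly on $[a,b]$ to $J_a^n F$, i.e. $\sup_{x \in [a,b]} \left| \frac{1}{\Gamma(n)} \int_a^x (x-t)^{n-1} (F_k(t) - F(t))\,dt \right| \to 0$ as $k \to \infty$. (This is the transport to primitives of the paper's Theorem that if $f_k \to f$ in the Alexiewicz norm on $D_{HK}$ then $\mathcal{J}_a^n f_k \to \mathcal{J}_a^n f$ in the Alexiewicz norm.) -/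
open MeasureTheory Set

lemma rl_kernel_integrable (a n x : ℝ) (hn : 0 < n) :
    IntervalIntegrable (fun t => (x - t) ^ (n - 1)) volume a x := by
  have h := (intervalIntegral.intervalIntegrable_rpow' (a := x - a) (b := x - x)
    (r := n - 1) (by linarith)).comp_sub_left x
  simpa using h

lemma rl_integrable (a n x : ℝ) (hn : 0 < n) (hax : a ≤ x) (h : ℝ → ℝ)
    (hc : ContinuousOn h (Icc a x)) :
    IntervalIntegrable (fun t => (x - t) ^ (n - 1) * h t) volume a x :=
  (rl_kernel_integrable a n x hn).mul_continuousOn (by rwa [uIcc_of_le hax])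

lemma rl_kernel_integral (a n x : ℝ) (hn : 0 < n) (hax : a ≤ x) :
    ∫ t in a..x, (x - t) ^ (n - 1) = (x - a) ^ n / n := by
  rw [intervalIntegral.integral_comp_sub_left (fun u => u ^ (n - 1)) x, sub_self,
    integral_rpow (Or.inl (by linarith)), sub_add_cancel,
    Real.zero_rpow (by linarith)]
  ring_nf

lemma rl_key (a b n : ℝ) (hab : a ≤ b) (hn : 0 < n) (h : ℝ → ℝ)
    (hc : ContinuousOn h (Icc a b)) (δ : ℝ) (hδ : 0 ≤ δ)
    (hb : ∀ t ∈ Icc a b, |h t| ≤ δ) (x : ℝ) (hx : x ∈ Icc a b) :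
    |∫ t in a..x, (x - t) ^ (n - 1) * h t| ≤ δ * ((b - a) ^ n / n) := by
  obtain ⟨hax, hxb⟩ := hx
  have hker := rl_kernel_integrable a n x hn
  have hbound : ∀ᵐ t ∂(volume.restrict (Set.uIoc a x)),
      ‖(x - t) ^ (n - 1) * h t‖ ≤ δ * (x - t) ^ (n - 1) := by
    rw [Filter.eventually_iff_exists_mem]
    refine ⟨Set.uIoc a x, self_mem_ae_restrict measurableSet_uIoc, fun t ht => ?_⟩
    rw [uIoc_of_le hax] at ht
    have h1 : 0 ≤ (x - t) ^ (n - 1) := Real.rpow_nonneg (by linarith [ht.2]) _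
    rw [Real.norm_eq_abs, abs_mul, abs_of_nonneg h1, mul_comm δ]
    exact mul_le_mul_of_nonneg_left (hb t ⟨le_of_lt ht.1, le_trans ht.2 hxb⟩) h1
  calc |∫ t in a..x, (x - t) ^ (n - 1) * h t|
      ≤ |∫ t in a..x, δ * (x - t) ^ (n - 1)| :=
        intervalIntegral.norm_integral_le_abs_of_norm_le hbound (hker.const_mul δ)
    _ = δ * ((x - a) ^ n / n) := by
        rw [intervalIntegral.integral_const_mul, rl_kernel_integral a n x hn hax, abs_mul,
          abs_of_nonneg hδ, abs_of_nonneg (div_nonneg (Real.rpow_nonneg (by linarith) n) hn.le)]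
    _ ≤ δ * ((b - a) ^ n / n) := by
        have h2 : (x - a) ^ n ≤ (b - a) ^ n :=
          Real.rpow_le_rpow (by linarith) (by linarith) hn.le
        exact mul_le_mul_of_nonneg_left ((div_le_div_iff_of_pos_right hn).mpr h2) hδ

theorem rl_integral_continuous_in_uniform_norm (a b n : ℝ) (hab : a < b) (hn : 0 < n)
    (F : ℕ → ℝ → ℝ) (G : ℝ → ℝ)
    (hFk : ∀ k, ContinuousOn (F k) (Icc a b)) (hG : ContinuousOn G (Icc a b))
    (hconv : TendstoUniformlyOn F G Filter.atTop (Icc a b)) :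
    TendstoUniformlyOn (fun k => rlInt a n (F k)) (rlInt a n G) Filter.atTop (Icc a b) := by
  rw [Metric.tendstoUniformlyOn_iff] at hconv ⊢
  intro ε hε
  have hΓ : 0 < Real.Gamma n := Real.Gamma_pos_of_pos hn
  set C : ℝ := (1 / Real.Gamma n) * ((b - a) ^ n / n) with hCdef
  have hC0 : 0 < C := by
    have : (0:ℝ) < (b - a) ^ n := Real.rpow_pos_of_pos (by linarith) n
    positivity
  have hδ0 : 0 < ε / (2 * C) := by positivity
  filter_upwards [hconv _ hδ0] with k hk
  intro x hx
  have hax : a ≤ x := hx.1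
  have hsub : ContinuousOn (fun t => G t - F k t) (Icc a b) := hG.sub (hFk k)
  have hbd : ∀ t ∈ Icc a b, |G t - F k t| ≤ ε / (2 * C) := by
    intro t ht
    have := hk t ht
    rw [Real.dist_eq] at this
    exact this.le
  have h1 : IntervalIntegrable (fun t => (x - t) ^ (n - 1) * G t) volume a x :=
    rl_integrable a n x hn hax G (hG.mono (Icc_subset_Icc le_rfl hx.2))
  have h2 : IntervalIntegrable (fun t => (x - t) ^ (n - 1) * F k t) volume a x :=
    rl_integrable a n x hn hax (F k) ((hFk k).mono (Icc_subset_Icc le_rfl hx.2))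
  have key := rl_key a b n hab.le hn (fun t => G t - F k t) hsub (ε / (2 * C)) hδ0.le hbd x hx
  have heq : rlInt a n G x - rlInt a n (F k) x
      = (1 / Real.Gamma n) * ∫ t in a..x, (x - t) ^ (n - 1) * (G t - F k t) := by
    rw [rlInt, rlInt, ← mul_sub, ← intervalIntegral.integral_sub h1 h2]
    congr 1
    apply intervalIntegral.integral_congr
    intro t _
    ring
  rw [Real.dist_eq, heq, abs_mul, abs_of_nonneg (by positivity)]
  calc 1 / Real.Gamma n * |∫ t in a..x, (x - t) ^ (n - 1) * (G t - F k t)|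
      ≤ 1 / Real.Gamma n * (ε / (2 * C) * ((b - a) ^ n / n)) := by gcongr
    _ = ε / 2 := by
        have hB : (0:ℝ) < (b - a) ^ n := Real.rpow_pos_of_pos (by linarith) n
        rw [hCdef]
        field_simp
    _ < ε := by linarith
end

section
/- Let $a < b$ be real numbers, $n > 0$, $f \in L^1[a,b]$, and let $F(x) := \int_a^x f(t)\,dt$ be its indefinite integral. Then for every $x \in [a,b]$, $J_a^n F(x) = \int_a^x J_a^n f(t)\,dt$; consequently $J_a^n F$ is differentiable at almost every $x \in (a,b)$ with derivative $(J_a^n F)'(x) = J_a^n f(x)$. (This is the content, for Lebesgue integrable $f$, of the paper's identity $\mathcal{J}_a^n f = D(\mathcal{J}_a^n F)$, i.e. the fractional integral of $f$ is the derivative of the fractional integral of its primitive — a property the paper notes is new even for Lebesgue integrable functions.) -/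
open MeasureTheory Set Filter Topology

lemma integrableOn_rpow_sub {r : ℝ} (hr : -1 < r) (c x : ℝ) :
    IntegrableOn (fun t => (t - c) ^ r) (Ioc c x) volume := by
  have h := (intervalIntegral.intervalIntegrable_rpow' hr (a := 0) (b := x - c)).comp_sub_right c
  simpa using h.1

lemma integrableOn_rpow_sub' {r : ℝ} (hr : -1 < r) (x s : ℝ) :
    IntegrableOn (fun t => (x - t) ^ r) (Ioc s x) volume := by
  have h := (intervalIntegral.intervalIntegrable_rpow' hr (a := 0) (b := x - s)).comp_sub_left x
  simpa using h.2

lemma kernel_integral1 {n : ℝ} (hn : 0 < n) {s x : ℝ} (hsx : s ≤ x) :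
    ∫ t in Ioc s x, (x - t) ^ (n - 1) = (x - s) ^ n / n := by
  have h1 : -1 < n - 1 := by linarith
  have h2 : n - 1 + 1 = n := by ring
  rw [← intervalIntegral.integral_of_le hsx,
    intervalIntegral.integral_comp_sub_left (fun u => u ^ (n - 1)) x, sub_self,
    integral_rpow (Or.inl h1), h2, Real.zero_rpow hn.ne', sub_zero]

lemma kernel_integral2 {n : ℝ} (hn : 0 < n) {s x : ℝ} (hsx : s ≤ x) :
    ∫ t in Ioc s x, (t - s) ^ (n - 1) = (x - s) ^ n / n := by
  have h1 : -1 < n - 1 := by linarith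
  have h2 : n - 1 + 1 = n := by ring
  rw [← intervalIntegral.integral_of_le hsx,
    intervalIntegral.integral_comp_sub_right (fun u => u ^ (n - 1)) s, sub_self,
    integral_rpow (Or.inl h1), h2, Real.zero_rpow hn.ne', sub_zero]

lemma main_swap (a x n : ℝ) (hn : 0 < n) (hax : a ≤ x) (f : ℝ → ℝ)
    (hf : IntegrableOn f (Ioc a x) volume) (F : ℝ → ℝ) (hF : ∀ y, F y = ∫ t in a..y, f t) :
    (∫ t in Ioc a x, (x - t) ^ (n - 1) * F t
        = ∫ s in Ioc a x, ((x - s) ^ n / n) * f s) ∧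
    ((∫ t in Ioc a x, ∫ s in Ioc a t, (t - s) ^ (n - 1) * f s)
        = ∫ s in Ioc a x, ((x - s) ^ n / n) * f s) ∧
    IntegrableOn (fun t => ∫ s in Ioc a t, (t - s) ^ (n - 1) * f s) (Ioc a x) volume := by
  have hr : -1 < n - 1 := by linarith
  set μ1 : Measure ℝ := volume.restrict (Ioc a x) with hμ1
  have hf1 : Integrable f μ1 := hf
  set T : Set (ℝ × ℝ) := {p | p.2 ≤ p.1} with hT
  have hTm : MeasurableSet T := measurableSet_le measurable_snd measurable_fst
  set H1 : ℝ × ℝ → ℝ := fun p => (x - p.1) ^ (n - 1) * f p.2 with hH1def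
  set g1 : ℝ × ℝ → ℝ := T.indicator H1 with hg1def
  have hg1 : Integrable g1 (μ1.prod μ1) :=
    (Integrable.mul_prod (integrableOn_rpow_sub' hr x a) hf1).indicator hTm
  set H2 : ℝ × ℝ → ℝ := fun p => (p.1 - p.2) ^ (n - 1) * f p.2 with hH2def
  set g2 : ℝ × ℝ → ℝ := T.indicator H2 with hg2def
  have hH2m : AEStronglyMeasurable H2 (μ1.prod μ1) := by
    apply AEStronglyMeasurable.mul
    · exact (by fun_prop : Measurable fun p : ℝ × ℝ => (p.1 - p.2) ^ (n - 1)).aestronglyMeasurable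
    · exact hf1.aestronglyMeasurable.comp_snd
  have hg2m : AEStronglyMeasurable g2 (μ1.prod μ1) := hH2m.indicator hTm
  -- integrability of g2 via the shear (u, s) ↦ (u + s, s)
  have hg2 : Integrable g2 (μ1.prod μ1) := by
    set φ : ℝ → ℝ := (Ioc 0 (x - a)).indicator fun u => u ^ (n - 1) with hφdef
    set ψ : ℝ → ℝ := (Ioc a x).indicator fun s => |f s| with hψdef
    have hφ : Integrable φ volume := by
      rw [hφdef, integrable_indicator_iff measurableSet_Ioc]
      exact (intervalIntegral.intervalIntegrable_rpow' hr (a := 0) (b := x - a)).1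
    have hψ : Integrable ψ volume := by
      rw [hψdef, integrable_indicator_iff measurableSet_Ioc]
      exact hf.abs
    have hP : Integrable (fun p : ℝ × ℝ => φ p.1 * ψ p.2) (volume.prod volume) :=
      hφ.mul_prod hψ
    have hshear : Integrable (fun p : ℝ × ℝ => φ (p.1 - p.2) * ψ p.2) (volume.prod volume) := by
      have h := ((measurePreserving_sub_prod (volume : Measure ℝ) volume).integrable_comp
        hP.aestronglyMeasurable).mpr hP
      exact h
    -- diagonal is null
    have hdiag : (μ1.prod μ1) {p : ℝ × ℝ | p.1 = p.2} = 0 := by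
      rw [Measure.prod_apply (measurableSet_eq_fun measurable_fst measurable_snd)]
      have h0 : ∀ t : ℝ, μ1 (Prod.mk t ⁻¹' {p : ℝ × ℝ | p.1 = p.2}) = 0 := by
        intro t
        have he : (Prod.mk t ⁻¹' {p : ℝ × ℝ | p.1 = p.2}) = {t} := by
          ext s; simp [eq_comm]
        rw [he]
        refine le_antisymm (le_trans (Measure.restrict_apply_le _ _) ?_) zero_le
        simp [Real.volume_singleton]
      simp [h0]
    have haediag : ∀ᵐ p ∂(μ1.prod μ1), p.1 ≠ p.2 := by
      rw [ae_iff]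
      convert hdiag using 2
      ext p; simp
    have haemem : ∀ᵐ p ∂(μ1.prod μ1), p ∈ (Ioc a x) ×ˢ (Ioc a x) := by
      rw [hμ1, Measure.prod_restrict]
      exact ae_restrict_mem (measurableSet_Ioc.prod measurableSet_Ioc)
    have hbound : ∀ᵐ p ∂(μ1.prod μ1), ‖g2 p‖ ≤ φ (p.1 - p.2) * ψ p.2 := by
      filter_upwards [haediag, haemem] with p hne hp
      obtain ⟨hp1, hp2⟩ := hp
      by_cases hle : p.2 ≤ p.1
      · have hlt : p.2 < p.1 := lt_of_le_of_ne hle (Ne.symm hne)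
        rw [hg2def, indicator_of_mem (by exact hle : p ∈ T)]
        have hub : 0 < p.1 - p.2 := sub_pos.2 hlt
        have h1 : φ (p.1 - p.2) = (p.1 - p.2) ^ (n - 1) := by
          rw [hφdef, indicator_of_mem]
          exact ⟨hub, by linarith [hp1.2, hp2.1]⟩
        have h2 : ψ p.2 = |f p.2| := by rw [hψdef, indicator_of_mem hp2]
        rw [h1, h2, hH2def]
        rw [Real.norm_eq_abs, abs_mul, abs_of_nonneg (Real.rpow_nonneg hub.le _)]
      · rw [hg2def, indicator_of_notMem (by exact hle : p ∉ T), norm_zero]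
        apply mul_nonneg
        · exact indicator_nonneg (fun u hu => Real.rpow_nonneg hu.1.le _) _
        · exact indicator_nonneg (fun u _ => abs_nonneg _) _
    have hshear' : Integrable (fun p : ℝ × ℝ => φ (p.1 - p.2) * ψ p.2) (μ1.prod μ1) := by
      rw [hμ1, Measure.prod_restrict]
      exact hshear.integrableOn
    exact hshear'.mono' hg2m hbound
  -- pointwise identification of the inner integrals
  have hA : ∀ t ∈ Ioc a x, (∫ s, g1 (t, s) ∂μ1) = (x - t) ^ (n - 1) * F t := by
    intro t ht
    have he : (fun s => g1 (t, s)) = (Iic t).indicator (fun s => (x - t) ^ (n - 1) * f s) := by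
      funext s
      by_cases h : s ≤ t
      · rw [hg1def, indicator_of_mem (by exact h : (t, s) ∈ T), indicator_of_mem (show _ ∈ Iic _ from h)]
      · rw [hg1def, indicator_of_notMem (by exact h : (t, s) ∉ T), indicator_of_notMem (show _ ∉ Iic _ from h)]
    rw [he, hμ1, setIntegral_indicator measurableSet_Iic, Ioc_inter_Iic,
      min_eq_right ht.2, integral_const_mul, hF t, intervalIntegral.integral_of_le ht.1.le]
  have hB' : ∀ t ∈ Ioc a x, (∫ s, g2 (t, s) ∂μ1) = ∫ s in Ioc a t, (t - s) ^ (n - 1) * f s := by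
    intro t ht
    have he : (fun s => g2 (t, s)) = (Iic t).indicator (fun s => (t - s) ^ (n - 1) * f s) := by
      funext s
      by_cases h : s ≤ t
      · rw [hg2def, indicator_of_mem (by exact h : (t, s) ∈ T), indicator_of_mem (show _ ∈ Iic _ from h)]
      · rw [hg2def, indicator_of_notMem (by exact h : (t, s) ∉ T), indicator_of_notMem (show _ ∉ Iic _ from h)]
    rw [he, hμ1, setIntegral_indicator measurableSet_Iic, Ioc_inter_Iic, min_eq_right ht.2]
  have hIcc : ∀ s ∈ Ioc a x, Ioc a x ∩ Ici s = Icc s x := by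
    intro s hs
    ext t
    simp only [mem_inter_iff, mem_Ioc, mem_Ici, mem_Icc]
    constructor
    · rintro ⟨⟨_, h2⟩, h3⟩; exact ⟨h3, h2⟩
    · rintro ⟨h1, h2⟩; exact ⟨⟨lt_of_lt_of_le hs.1 h1, h2⟩, h1⟩
  have hA' : ∀ s ∈ Ioc a x, (∫ t, g1 (t, s) ∂μ1) = ((x - s) ^ n / n) * f s := by
    intro s hs
    have he : (fun t => g1 (t, s)) = (Ici s).indicator (fun t => (x - t) ^ (n - 1) * f s) := by
      funext t
      by_cases h : s ≤ t
      · rw [hg1def, indicator_of_mem (by exact h : (t, s) ∈ T), indicator_of_mem (show t ∈ Ici s from h)]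
      · rw [hg1def, indicator_of_notMem (by exact h : (t, s) ∉ T), indicator_of_notMem (show t ∉ Ici s from h)]
    rw [he, hμ1, setIntegral_indicator measurableSet_Ici, hIcc s hs,
      setIntegral_congr_set (Ioc_ae_eq_Icc).symm, integral_mul_const, kernel_integral1 hn hs.2]
  have hB : ∀ s ∈ Ioc a x, (∫ t, g2 (t, s) ∂μ1) = ((x - s) ^ n / n) * f s := by
    intro s hs
    have he : (fun t => g2 (t, s)) = (Ici s).indicator (fun t => (t - s) ^ (n - 1) * f s) := by
      funext t
      by_cases h : s ≤ t
      · rw [hg2def, indicator_of_mem (by exact h : (t, s) ∈ T), indicator_of_mem (show t ∈ Ici s from h)]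
      · rw [hg2def, indicator_of_notMem (by exact h : (t, s) ∉ T), indicator_of_notMem (show t ∉ Ici s from h)]
    rw [he, hμ1, setIntegral_indicator measurableSet_Ici, hIcc s hs,
      setIntegral_congr_set (Ioc_ae_eq_Icc).symm, integral_mul_const, kernel_integral2 hn hs.2]
  have swap1 := integral_integral_swap (f := fun t s => g1 (t, s)) (μ := μ1) (ν := μ1) hg1
  have swap2 := integral_integral_swap (f := fun t s => g2 (t, s)) (μ := μ1) (ν := μ1) hg2
  refine ⟨?_, ?_, ?_⟩
  · calc ∫ t in Ioc a x, (x - t) ^ (n - 1) * F t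
        = ∫ t, (∫ s, g1 (t, s) ∂μ1) ∂μ1 :=
          (setIntegral_congr_fun measurableSet_Ioc (fun t ht => (hA t ht))).symm
      _ = ∫ s, (∫ t, g1 (t, s) ∂μ1) ∂μ1 := swap1
      _ = ∫ s in Ioc a x, ((x - s) ^ n / n) * f s :=
          setIntegral_congr_fun measurableSet_Ioc (fun s hs => hA' s hs)
  · calc (∫ t in Ioc a x, ∫ s in Ioc a t, (t - s) ^ (n - 1) * f s)
        = ∫ t, (∫ s, g2 (t, s) ∂μ1) ∂μ1 :=
          (setIntegral_congr_fun measurableSet_Ioc (fun t ht => (hB' t ht))).symm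
      _ = ∫ s, (∫ t, g2 (t, s) ∂μ1) ∂μ1 := swap2
      _ = ∫ s in Ioc a x, ((x - s) ^ n / n) * f s :=
          setIntegral_congr_fun measurableSet_Ioc (fun s hs => hB s hs)
  · have hint : Integrable (fun t => ∫ s, g2 (t, s) ∂μ1) μ1 := hg2.integral_prod_left
    apply hint.congr
    filter_upwards [ae_restrict_mem (μ := volume) (s := Ioc a x) measurableSet_Ioc] with t ht
    exact hB' t ht


lemma ae_hasDerivAt_intervalIntegral (h : ℝ → ℝ) (hh : Integrable h volume) (a : ℝ) :
    ∀ᵐ x, HasDerivAt (fun y => ∫ t in a..y, h t) (h x) x := by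
  set G : ℝ → ℝ := fun y => ∫ t in a..y, h t with hG
  filter_upwards [(IsUnifLocDoublingMeasure.vitaliFamily (volume : Measure ℝ)
    1).ae_tendsto_average_norm_sub hh.locallyIntegrable] with x hx
  have hI : ∀ y : ℝ, G y - G x = ∫ t in x..y, h t := fun y =>
    intervalIntegral.integral_interval_sub_left (hh.intervalIntegrable) (hh.intervalIntegrable)
  have slopeEq : ∀ y : ℝ, y ≠ x →
      slope G x y - h x = (∫ t in x..y, (h t - h x)) / (y - x) := by
    intro y hy
    have hyx : y - x ≠ 0 := sub_ne_zero.2 hy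
    rw [intervalIntegral.integral_sub hh.intervalIntegrable intervalIntegrable_const,
      intervalIntegral.integral_const, smul_eq_mul, sub_div, mul_div_cancel_left₀ _ hyx,
      slope_def_field, hI y]
  have havg : ∀ u v : ℝ, u < v →
      ⨍ t in Icc u v, ‖h t - h x‖ = (∫ t in u..v, |h t - h x|) / (v - u) := by
    intro u v huv
    rw [setAverage_eq, integral_Icc_eq_integral_Ioc, Real.volume_real_Icc_of_le huv.le,
      ← intervalIntegral.integral_of_le huv.le]
    simp only [smul_eq_mul, Real.norm_eq_abs]
    rw [inv_mul_eq_div]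
  have R : Tendsto (fun y => |slope G x y - h x|) (𝓝[>] x) (𝓝 0) := by
    have hcomp := hx.comp (Real.tendsto_Icc_vitaliFamily_right x)
    apply squeeze_zero' (Eventually.of_forall fun y => abs_nonneg _) _ hcomp
    filter_upwards [self_mem_nhdsWithin] with y hy
    have hxy : x < y := hy
    simp only [Function.comp_apply]
    rw [slopeEq y hxy.ne', havg x y hxy, abs_div, abs_of_pos (by linarith : (0:ℝ) < y - x)]
    apply div_le_div_of_nonneg_right ?_ (by linarith)
    exact intervalIntegral.abs_integral_le_integral_abs hxy.le
  have L : Tendsto (fun y => |slope G x y - h x|) (𝓝[<] x) (𝓝 0) := by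
    have hcomp := hx.comp (Real.tendsto_Icc_vitaliFamily_left x)
    apply squeeze_zero' (Eventually.of_forall fun y => abs_nonneg _) _ hcomp
    filter_upwards [self_mem_nhdsWithin] with y hy
    have hxy : y < x := hy
    simp only [Function.comp_apply]
    rw [slopeEq y hxy.ne, havg y x hxy, abs_div, abs_of_neg (by linarith : y - x < 0),
      intervalIntegral.integral_symm]
    rw [abs_neg, neg_sub]
    apply div_le_div_of_nonneg_right ?_ (by linarith)
    exact intervalIntegral.abs_integral_le_integral_abs hxy.le
  rw [hasDerivAt_iff_tendsto_slope]
  have hT : Tendsto (fun y => |slope G x y - h x|) (𝓝[≠] x) (𝓝 0) := by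
    rw [← nhdsLT_sup_nhdsGT]
    exact tendsto_sup.2 ⟨L, R⟩
  rw [tendsto_iff_dist_tendsto_zero]
  simpa [Real.dist_eq] using hT

theorem rl_integral_of_primitive (a b n : ℝ) (hab : a < b) (hn : 0 < n)
    (f : ℝ → ℝ) (hf : IntegrableOn f (Icc a b) volume)
    (F : ℝ → ℝ) (hF : ∀ x, F x = ∫ t in a..x, f t) :
    (∀ x ∈ Icc a b, rlInt a n F x = ∫ t in a..x, rlInt a n f t) ∧
    ∀ᵐ x ∂(volume.restrict (Ioo a b)), HasDerivAt (rlInt a n F) (rlInt a n f x) x := by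
  have part1 : ∀ x ∈ Icc a b, rlInt a n F x = ∫ t in a..x, rlInt a n f t := by
    intro x hx
    have hax : a ≤ x := hx.1
    have hfx : IntegrableOn f (Ioc a x) volume :=
      hf.mono_set (fun t ht => ⟨ht.1.le, ht.2.trans hx.2⟩)
    obtain ⟨e1, e2, _⟩ := main_swap a x n hn hax f hfx F hF
    have hRHS : ∀ t ∈ Ioc a x, rlInt a n f t
        = (1 / Real.Gamma n) * ∫ s in Ioc a t, (t - s) ^ (n - 1) * f s := by
      intro t ht
      simp only [rlInt]
      rw [intervalIntegral.integral_of_le ht.1.le]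
    rw [show rlInt a n F x = (1 / Real.Gamma n) * ∫ t in Ioc a x, (x - t) ^ (n - 1) * F t from by
      simp only [rlInt]; rw [intervalIntegral.integral_of_le hax]]
    rw [intervalIntegral.integral_of_le hax,
      setIntegral_congr_fun measurableSet_Ioc hRHS, MeasureTheory.integral_const_mul, e1, e2]
  refine ⟨part1, ?_⟩
  obtain ⟨-, -, hInt⟩ := main_swap a b n hn hab.le f (hf.mono_set Ioc_subset_Icc_self) F hF
  have hgInt : IntegrableOn (rlInt a n f) (Ioc a b) volume := by
    have h1 := hInt.const_mul (1 / Real.Gamma n)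
    apply h1.congr
    filter_upwards [ae_restrict_mem measurableSet_Ioc] with t ht
    simp only [rlInt]
    rw [intervalIntegral.integral_of_le ht.1.le]
  set g' : ℝ → ℝ := (Ioc a b).indicator (rlInt a n f) with hg'def
  have hg'int : Integrable g' volume := (integrable_indicator_iff measurableSet_Ioc).2 hgInt
  have hae := ae_hasDerivAt_intervalIntegral g' hg'int a
  rw [ae_restrict_iff' measurableSet_Ioo]
  filter_upwards [hae] with x hx hmem
  have h1 : g' x = rlInt a n f x := indicator_of_mem (mem_Ioc.mpr ⟨hmem.1, hmem.2.le⟩) _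
  rw [← h1]
  apply hx.congr_of_eventuallyEq
  filter_upwards [Icc_mem_nhds hmem.1 hmem.2] with y hy
  rw [part1 y hy, intervalIntegral.integral_of_le hy.1, intervalIntegral.integral_of_le hy.1]
  exact setIntegral_congr_fun measurableSet_Ioc fun t ht =>
    (indicator_of_mem (mem_Ioc.mpr ⟨ht.1, ht.2.trans hy.2⟩) _).symm
end

section
/- Let $a < b$ be real numbers, $n > 0$, $f \in L^1[a,b]$, and let $\phi : [a,b] \to \mathbb{R}$ be a function of bounded variation on $[a,b]$. Then $\int_a^b \phi(x)\, J_a^n f(x)\,dx = \int_a^b f(t)\, J_{b^-}^n \phi(t)\,dt$, where $J_{b^-}^n \phi(t) := \frac{1}{\Gamma(n)} \int_t^b (x-t)^{n-1} \phi(x)\,dx$ is the right-sided Riemann–Liouville fractional integral, and both double integrals are well defined. (This is the paper's integration-by-parts formula for the fractional integral, stated here for Lebesgue integrable $f$, a subspace of $D_{HK}$.) -/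
open MeasureTheory Set

/-- The right-sided Riemann–Liouville fractional integral of order `n` with endpoint `b`. -/
noncomputable def rlIntR (b n : ℝ) (h : ℝ → ℝ) (t : ℝ) : ℝ :=
  (1 / Real.Gamma n) * ∫ x in t..b, (x - t) ^ (n - 1) * h x

/-- Main work lemma: the integration-by-parts formula for honestly measurable data. -/
theorem rl_aux (a b n : ℝ) (hab : a < b) (hn : 0 < n)
    (g : ℝ → ℝ) (hgm : Measurable g) (hg : Integrable g (volume.restrict (Icc a b)))
    (ψ : ℝ → ℝ) (hψm : Measurable ψ) (M : ℝ) (hψb : ∀ x, |ψ x| ≤ M) :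
    Integrable (fun x => ψ x * rlInt a n g x) (volume.restrict (Icc a b)) ∧
    Integrable (fun t => g t * rlIntR b n ψ t) (volume.restrict (Icc a b)) ∧
    ∫ x in Icc a b, ψ x * rlInt a n g x = ∫ t in Icc a b, g t * rlIntR b n ψ t := by
  have hΓ : 0 < Real.Gamma n := Real.Gamma_pos_of_pos hn
  have hM : 0 ≤ M := le_trans (abs_nonneg _) (hψb 0)
  set μ := volume.restrict (Icc a b) with hμdef
  set k : ℝ × ℝ → ℝ := fun p => if p.1 ≤ p.2 then (p.2 - p.1) ^ (n - 1) else 0 with hkdef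
  have hkm : Measurable k :=
    Measurable.ite (measurableSet_le measurable_fst measurable_snd)
      ((measurable_snd.sub measurable_fst).pow measurable_const) measurable_const
  have hknn : ∀ p : ℝ × ℝ, 0 ≤ k p := by
    intro p
    simp only [hkdef]
    split
    · exact Real.rpow_nonneg (by linarith [‹p.1 ≤ p.2›]) _
    · exact le_rfl
  set G : ℝ × ℝ → ℝ := fun p => k p * ψ p.2 * g p.1 with hGdef
  have hGm : Measurable G :=
    (hkm.mul (hψm.comp measurable_snd)).mul (hgm.comp measurable_fst)
  -- The kernel `x ↦ k (t, x)` is integrable on `Icc a b`, with known integral.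
  have hkerind : ∀ t ∈ Icc a b, (fun x => k (t, x)) =
      (Ici t).indicator fun x => (x - t) ^ (n - 1) := by
    intro t ht
    funext x
    by_cases h : t ≤ x <;> simp [hkdef, indicator_apply, mem_Ici, h]
  have hsetI : ∀ t ∈ Icc a b, Ici t ∩ Icc a b = Icc t b := by
    intro t ht
    ext y
    constructor
    · rintro ⟨h1, _, h3⟩; exact ⟨h1, h3⟩
    · rintro ⟨h1, h2⟩; exact ⟨h1, le_trans ht.1 h1, h2⟩
  have hkerII : ∀ t ∈ Icc a b, IntervalIntegrable (fun x => (x - t) ^ (n - 1)) volume t b := by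
    intro t ht
    have := (intervalIntegral.intervalIntegrable_rpow' (a := 0) (b := b - t)
      (show (-1 : ℝ) < n - 1 by linarith)).comp_sub_right t
    simpa using this
  have hker : ∀ t ∈ Icc a b, Integrable (fun x => k (t, x)) μ := by
    intro t ht
    rw [hkerind t ht]
    rw [integrable_indicator_iff measurableSet_Ici, IntegrableOn, hμdef,
      Measure.restrict_restrict measurableSet_Ici, hsetI t ht]
    rw [← IntegrableOn, integrableOn_Icc_iff_integrableOn_Ioc]
    exact (intervalIntegrable_iff_integrableOn_Ioc_of_le ht.2).mp (hkerII t ht)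
  have hkint : ∀ t ∈ Icc a b, ∫ x, k (t, x) ∂μ = (b - t) ^ n / n := by
    intro t ht
    rw [hkerind t ht, integral_indicator measurableSet_Ici, hμdef,
      Measure.restrict_restrict measurableSet_Ici, hsetI t ht,
      integral_Icc_eq_integral_Ioc, ← intervalIntegral.integral_of_le ht.2]
    rw [show (fun x => (x - t) ^ (n - 1)) = fun x => (fun u : ℝ => u ^ (n - 1)) (x - t) from rfl]
    rw [intervalIntegral.integral_comp_sub_right (fun u : ℝ => u ^ (n - 1)) t]
    rw [_root_.integral_rpow (Or.inl (by linarith))]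
    rw [sub_self, Real.zero_rpow (by linarith : n - 1 + 1 ≠ 0)]
    norm_num
  -- slices in `x` are integrable
  have hslice : ∀ t ∈ Icc a b, Integrable (fun x => G (t, x)) μ := by
    intro t ht
    have h3 : Integrable (fun x => ψ x * k (t, x)) μ :=
      (hker t ht).bdd_mul hψm.aestronglyMeasurable
        (c := M) (Filter.Eventually.of_forall fun x => by simpa [Real.norm_eq_abs] using hψb x)
    refine (h3.mul_const (g t)).congr (Filter.Eventually.of_forall fun x => ?_)
    simp only [hGdef]; ring
  -- bound for the iterated norm integral
  have hbound : ∀ t ∈ Icc a b, ∫ x, ‖G (t, x)‖ ∂μ ≤ M * ((b - a) ^ n / n) * |g t| := by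
    intro t ht
    have h1 : ∀ x, ‖G (t, x)‖ ≤ M * |g t| * k (t, x) := by
      intro x
      rw [Real.norm_eq_abs]
      calc |G (t, x)| = k (t, x) * |ψ x| * |g t| := by
            simp only [hGdef]
            rw [abs_mul, abs_mul, abs_of_nonneg (hknn _)]
        _ ≤ k (t, x) * M * |g t| := by
            gcongr
            · exact hknn _
            · exact hψb x
        _ = M * |g t| * k (t, x) := by ring
    calc ∫ x, ‖G (t, x)‖ ∂μ ≤ ∫ x, M * |g t| * k (t, x) ∂μ :=
          integral_mono_of_nonneg (Filter.Eventually.of_forall fun x => norm_nonneg _)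
            ((hker t ht).const_mul _) (Filter.Eventually.of_forall h1)
      _ = M * |g t| * ((b - t) ^ n / n) := by rw [integral_const_mul, hkint t ht]
      _ ≤ M * |g t| * ((b - a) ^ n / n) := by
          have hbt : (b - t) ^ n ≤ (b - a) ^ n :=
            Real.rpow_le_rpow (by linarith [ht.2]) (by linarith [ht.1]) hn.le
          have h0 : 0 ≤ M * |g t| := mul_nonneg hM (abs_nonneg _)
          gcongr
      _ = M * ((b - a) ^ n / n) * |g t| := by ring
  -- product integrability
  have hG : Integrable G (μ.prod μ) := by
    refine (integrable_prod_iff hGm.aestronglyMeasurable).mpr ⟨?_, ?_⟩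
    · filter_upwards [ae_restrict_mem measurableSet_Icc] with t ht using hslice t ht
    · have hmeas : AEStronglyMeasurable (fun t => ∫ x, ‖G (t, x)‖ ∂μ) μ :=
        (hGm.norm.aestronglyMeasurable).integral_prod_right'
      refine Integrable.mono' ((hg.abs).const_mul (M * ((b - a) ^ n / n))) hmeas ?_
      filter_upwards [ae_restrict_mem measurableSet_Icc] with t ht
      rw [Real.norm_eq_abs, abs_of_nonneg (integral_nonneg fun x => norm_nonneg _)]
      exact hbound t ht
  -- inner integral identifications
  have hIic : ∀ x ∈ Icc a b, ∫ t, G (t, x) ∂μ = Real.Gamma n * (ψ x * rlInt a n g x) := by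
    intro x hx
    have e1 : (fun t => G (t, x)) =
        fun t => ψ x * ((Iic x).indicator (fun t => (x - t) ^ (n - 1) * g t) t) := by
      funext t
      by_cases h : t ≤ x <;> simp [hGdef, hkdef, indicator_apply, mem_Iic, h] <;> ring
    have hset : Iic x ∩ Icc a b = Icc a x := by
      ext y
      constructor
      · rintro ⟨h1, h2, _⟩; exact ⟨h2, h1⟩
      · rintro ⟨h1, h2⟩; exact ⟨h2, h1, le_trans h2 hx.2⟩
    rw [e1, integral_const_mul, integral_indicator measurableSet_Iic, hμdef,
      Measure.restrict_restrict measurableSet_Iic, hset,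
      integral_Icc_eq_integral_Ioc, ← intervalIntegral.integral_of_le hx.1]
    rw [rlInt]
    field_simp
  have hIci : ∀ t ∈ Icc a b, ∫ x, G (t, x) ∂μ = Real.Gamma n * (g t * rlIntR b n ψ t) := by
    intro t ht
    have e1 : (fun x => G (t, x)) =
        fun x => g t * ((Ici t).indicator (fun x => (x - t) ^ (n - 1) * ψ x) x) := by
      funext x
      by_cases h : t ≤ x <;> simp [hGdef, hkdef, indicator_apply, mem_Ici, h] <;> ring
    rw [e1, integral_const_mul, integral_indicator measurableSet_Ici, hμdef,
      Measure.restrict_restrict measurableSet_Ici, hsetI t ht,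
      integral_Icc_eq_integral_Ioc, ← intervalIntegral.integral_of_le ht.2]
    rw [rlIntR]
    field_simp
  -- wrap up
  have h1 : Integrable (fun x => ∫ t, G (t, x) ∂μ) μ := hG.integral_prod_right
  have h2 : Integrable (fun t => ∫ x, G (t, x) ∂μ) μ := hG.integral_prod_left
  have hL : Integrable (fun x => ψ x * rlInt a n g x) μ := by
    have h3 : Integrable (fun x => Real.Gamma n * (ψ x * rlInt a n g x)) μ :=
      h1.congr (by filter_upwards [ae_restrict_mem measurableSet_Icc] with x hx using hIic x hx)
    refine (h3.const_mul (Real.Gamma n)⁻¹).congr (Filter.Eventually.of_forall fun x => ?_)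
    field_simp
  have hR : Integrable (fun t => g t * rlIntR b n ψ t) μ := by
    have h3 : Integrable (fun t => Real.Gamma n * (g t * rlIntR b n ψ t)) μ :=
      h2.congr (by filter_upwards [ae_restrict_mem measurableSet_Icc] with t ht using hIci t ht)
    refine (h3.const_mul (Real.Gamma n)⁻¹).congr (Filter.Eventually.of_forall fun t => ?_)
    field_simp
  refine ⟨hL, hR, ?_⟩
  have hswap : ∫ t, ∫ x, G (t, x) ∂μ ∂μ = ∫ x, ∫ t, G (t, x) ∂μ ∂μ := by
    apply integral_integral_swap (f := fun t x => G (t, x))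
    exact hG
  calc ∫ x, ψ x * rlInt a n g x ∂μ
      = (Real.Gamma n)⁻¹ * ∫ x, Real.Gamma n * (ψ x * rlInt a n g x) ∂μ := by
        rw [integral_const_mul, ← mul_assoc, inv_mul_cancel₀ hΓ.ne', one_mul]
    _ = (Real.Gamma n)⁻¹ * ∫ x, (∫ t, G (t, x) ∂μ) ∂μ := by
        congr 1
        refine integral_congr_ae ?_
        filter_upwards [ae_restrict_mem measurableSet_Icc] with x hx using (hIic x hx).symm
    _ = (Real.Gamma n)⁻¹ * ∫ t, (∫ x, G (t, x) ∂μ) ∂μ := by rw [hswap]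
    _ = (Real.Gamma n)⁻¹ * ∫ t, Real.Gamma n * (g t * rlIntR b n ψ t) ∂μ := by
        congr 1
        refine integral_congr_ae ?_
        filter_upwards [ae_restrict_mem measurableSet_Icc] with t ht using hIci t ht
    _ = ∫ t, g t * rlIntR b n ψ t ∂μ := by
        rw [integral_const_mul, ← mul_assoc, inv_mul_cancel₀ hΓ.ne', one_mul]

theorem rl_integration_by_parts (a b n : ℝ) (hab : a < b) (hn : 0 < n)
    (f : ℝ → ℝ) (hf : IntegrableOn f (Icc a b) volume)
    (φ : ℝ → ℝ) (hφ : BoundedVariationOn φ (Icc a b)) :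
    IntegrableOn (fun x => φ x * rlInt a n f x) (Icc a b) volume ∧
    IntegrableOn (fun t => f t * rlIntR b n φ t) (Icc a b) volume ∧
    ∫ x in a..b, φ x * rlInt a n f x = ∫ t in a..b, f t * rlIntR b n φ t := by
  set μ := volume.restrict (Icc a b) with hμdef
  have hamem : a ∈ Icc a b := left_mem_Icc.mpr hab.le
  -- a.e.-measurable representative of φ, clamped to stay bounded
  have hφae : AEMeasurable φ μ := by
    obtain ⟨p, q, hp, hq, hpq⟩ :=
      hφ.locallyBoundedVariationOn.exists_monotoneOn_sub_monotoneOn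
    rw [hpq]
    exact (aemeasurable_restrict_of_monotoneOn measurableSet_Icc hp).sub
      (aemeasurable_restrict_of_monotoneOn measurableSet_Icc hq)
  set M : ℝ := |φ a| + (eVariationOn φ (Icc a b)).toReal with hMdef
  have hMb : ∀ x ∈ Icc a b, |φ x| ≤ M := by
    intro x hx
    have h1 := hφ.dist_le hx hamem
    rw [Real.dist_eq] at h1
    calc |φ x| = |(φ x - φ a) + φ a| := by ring_nf
      _ ≤ |φ x - φ a| + |φ a| := abs_add_le _ _
      _ ≤ M := by rw [hMdef]; linarith
  have hM0 : 0 ≤ M := le_trans (abs_nonneg _) (hMb a hamem)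
  set ψ : ℝ → ℝ := fun x => max (-M) (min M (hφae.mk φ x)) with hψdef
  have hψm : Measurable ψ :=
    measurable_const.max (measurable_const.min hφae.measurable_mk)
  have hψb : ∀ x, |ψ x| ≤ M := by
    intro x
    rw [abs_le]
    exact ⟨le_max_left _ _, max_le (by linarith) (min_le_left _ _)⟩
  have hψae : φ =ᵐ[μ] ψ := by
    filter_upwards [hφae.ae_eq_mk, ae_restrict_mem measurableSet_Icc] with x h1 h2
    have h3 := hMb x h2
    rw [abs_le] at h3
    simp only [hψdef, ← h1]
    rw [min_eq_right h3.2, max_eq_right (by linarith [h3.1])]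
  -- measurable representative of f
  set g : ℝ → ℝ := hf.aemeasurable.mk f with hgdef
  have hgm : Measurable g := hf.aemeasurable.measurable_mk
  have hgae : f =ᵐ[μ] g := hf.aemeasurable.ae_eq_mk
  have hg : Integrable g μ := hf.congr hgae
  obtain ⟨hL, hR, heq⟩ := rl_aux a b n hab hn g hgm hg ψ hψm M hψb
  -- transfer the fractional integrals back to `f` and `φ`
  have hrl : ∀ x ∈ Icc a b, rlInt a n f x = rlInt a n g x := by
    intro x hx
    unfold rlInt
    congr 1
    apply intervalIntegral.integral_congr_ae
    have hsub : Ioc a x ⊆ Icc a b := fun y hy => ⟨le_of_lt hy.1, le_trans hy.2 hx.2⟩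
    have h1 : ∀ᵐ t ∂volume.restrict (Ioc a x), f t = g t :=
      ae_restrict_of_ae_restrict_of_subset hsub hgae
    rw [ae_restrict_iff' measurableSet_Ioc] at h1
    filter_upwards [h1] with t ht hmem
    rw [uIoc_of_le hx.1] at hmem
    rw [ht hmem]
  have hrr : ∀ t ∈ Icc a b, rlIntR b n φ t = rlIntR b n ψ t := by
    intro t ht
    unfold rlIntR
    congr 1
    apply intervalIntegral.integral_congr_ae
    have hsub : Ioc t b ⊆ Icc a b := fun y hy => ⟨le_trans ht.1 (le_of_lt hy.1), hy.2⟩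
    have h1 : ∀ᵐ x ∂volume.restrict (Ioc t b), φ x = ψ x :=
      ae_restrict_of_ae_restrict_of_subset hsub hψae
    rw [ae_restrict_iff' measurableSet_Ioc] at h1
    filter_upwards [h1] with x hx hmem
    rw [uIoc_of_le ht.2] at hmem
    rw [hx hmem]
  have aeL : (fun x => ψ x * rlInt a n g x) =ᵐ[μ] fun x => φ x * rlInt a n f x := by
    filter_upwards [hψae, ae_restrict_mem measurableSet_Icc] with x h1 h2
    rw [← h1, hrl x h2]
  have aeR : (fun t => g t * rlIntR b n ψ t) =ᵐ[μ] fun t => f t * rlIntR b n φ t := by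
    filter_upwards [hgae, ae_restrict_mem measurableSet_Icc] with t h1 h2
    rw [← h1, hrr t h2]
  refine ⟨hL.congr aeL, hR.congr aeR, ?_⟩
  rw [intervalIntegral.integral_of_le hab.le, intervalIntegral.integral_of_le hab.le,
    ← integral_Icc_eq_integral_Ioc, ← integral_Icc_eq_integral_Ioc]
  calc ∫ x in Icc a b, φ x * rlInt a n f x
      = ∫ x in Icc a b, ψ x * rlInt a n g x := (integral_congr_ae aeL).symm
    _ = ∫ t in Icc a b, g t * rlIntR b n ψ t := heq
    _ = ∫ t in Icc a b, f t * rlIntR b n φ t := integral_congr_ae aeR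
end

section
/- Let $a < b$ be real numbers, $0 < n < 1$, and let $F : [a,b] \to \mathbb{R}$ be continuous with $F(a) = 0$. Then the following are equivalent: (1) there exists a continuous function $\Phi : [a,b] \to \mathbb{R}$ with $\Phi(a) = 0$ such that $J_a^n \Phi(x) = F(x)$ for every $x \in [a,b]$; (2) there exists a continuous function $g : [a,b] \to \mathbb{R}$ with $g(a) = 0$ such that $J_a^{1-n} F(x) = \int_a^x g(t)\,dt$ for every $x \in [a,b]$. (This is the transport to primitives of the paper's theorem that the Abel integral equation $\frac{1}{\Gamma(n)} \int_a^x (x-t)^{n-1} \varphi(t)\,dt = f(x)$ is solvable in $D_{HK}$ if and only if $\mathcal{J}_a^{1-n} f \in C[a,b]$ and $\mathcal{J}_a^{1-n} f(a) = 0$: here $F$ is the primitive of the data $f$, $\Phi$ is the primitive of the solution $\varphi$, and $g$ is the continuous function representing $\mathcal{J}_a^{1-n} f$.) -/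
open MeasureTheory Set

namespace AbelAux

/-- The real Beta integral in terms of the Gamma function. -/
lemma beta_real {α β : ℝ} (hα : 0 < α) (hβ : 0 < β) :
    ∫ u in (0:ℝ)..1, u ^ (β - 1) * (1 - u) ^ (α - 1)
      = Real.Gamma α * Real.Gamma β / Real.Gamma (α + β) := by
  have h := Complex.Gamma_mul_Gamma_eq_betaIntegral (s := (β:ℂ)) (t := (α:ℂ))
    (by simpa using hβ) (by simpa using hα)
  have hbeta : Complex.betaIntegral (β:ℂ) (α:ℂ)
      = ((∫ u in (0:ℝ)..1, u ^ (β - 1) * (1 - u) ^ (α - 1) : ℝ) : ℂ) := by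
    rw [Complex.betaIntegral, ← intervalIntegral.integral_ofReal]
    refine intervalIntegral.integral_congr fun u hu => ?_
    rw [uIcc_of_le (by norm_num : (0:ℝ) ≤ 1)] at hu
    have h1 : ((u ^ (β - 1) : ℝ) : ℂ) = (u:ℂ) ^ ((β:ℂ) - 1) := by
      rw [Complex.ofReal_cpow hu.1]; push_cast; ring_nf
    have h2 : (((1 - u) ^ (α - 1) : ℝ) : ℂ) = (1 - (u:ℂ)) ^ ((α:ℂ) - 1) := by
      rw [Complex.ofReal_cpow (by linarith [hu.2] : (0:ℝ) ≤ 1 - u)]; push_cast; ring_nf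
    push_cast
    rw [← h1, ← h2]
  rw [hbeta, ← Complex.ofReal_add, Complex.Gamma_ofReal, Complex.Gamma_ofReal,
    Complex.Gamma_ofReal, ← Complex.ofReal_mul, ← Complex.ofReal_mul] at h
  have h' := Complex.ofReal_inj.1 h
  have hne : Real.Gamma (α + β) ≠ 0 := (Real.Gamma_pos_of_pos (by linarith)).ne'
  rw [add_comm β α] at h'
  field_simp
  linarith [h']

/-- Change of variables `t = s + (x - s) u` in a Riemann–Liouville type integral. -/
lemma subst_aux {α : ℝ} (φ : ℝ → ℝ) {s x : ℝ} (hsx : s < x) :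
    ∫ t in s..x, (x - t) ^ (α - 1) * φ t
      = (x - s) ^ α * ∫ u in (0:ℝ)..1, (1 - u) ^ (α - 1) * φ (s + (x - s) * u) := by
  have hc : (0:ℝ) < x - s := sub_pos.2 hsx
  have h1 : ∫ t in s..x, (x - t) ^ (α - 1) * φ t
      = ∫ y in (0:ℝ)..(x - s), (x - (y + s)) ^ (α - 1) * φ (y + s) := by
    rw [intervalIntegral.integral_comp_add_right (fun t => (x - t) ^ (α - 1) * φ t) s]
    norm_num
  have h2 := intervalIntegral.integral_comp_mul_right (a := (0:ℝ)) (b := 1)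
    (fun y => (x - (y + s)) ^ (α - 1) * φ (y + s)) hc.ne'
  simp only [zero_mul, one_mul] at h2
  have h3 : ∫ y in (0:ℝ)..(x - s), (x - (y + s)) ^ (α - 1) * φ (y + s)
      = (x - s) * ∫ u in (0:ℝ)..1, (x - (u * (x - s) + s)) ^ (α - 1) * φ (u * (x - s) + s) := by
    rw [h2, smul_eq_mul, ← mul_assoc, mul_inv_cancel₀ hc.ne', one_mul]
  have h4 : EqOn (fun u => (x - (u * (x - s) + s)) ^ (α - 1) * φ (u * (x - s) + s))
      (fun u => (x - s) ^ (α - 1) * ((1 - u) ^ (α - 1) * φ (s + (x - s) * u))) (uIcc 0 1) := by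
    intro u hu
    rw [uIcc_of_le (by norm_num : (0:ℝ) ≤ 1)] at hu
    have e1 : x - (u * (x - s) + s) = (x - s) * (1 - u) := by ring
    have e2 : u * (x - s) + s = s + (x - s) * u := by ring
    show (x - (u * (x - s) + s)) ^ (α - 1) * φ (u * (x - s) + s)
      = (x - s) ^ (α - 1) * ((1 - u) ^ (α - 1) * φ (s + (x - s) * u))
    rw [e1, e2, Real.mul_rpow hc.le (by linarith [hu.2] : (0:ℝ) ≤ 1 - u), mul_assoc]
  rw [h1, h3, intervalIntegral.integral_congr h4, intervalIntegral.integral_const_mul,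
    ← mul_assoc]
  congr 1
  nth_rewrite 1 [← Real.rpow_one (x - s)]
  rw [← Real.rpow_add hc]
  ring_nf

/-- The Beta-type kernel integral. -/
lemma kernel_integral {α β : ℝ} (hα : 0 < α) (hβ : 0 < β) {s x : ℝ} (hsx : s < x) :
    ∫ t in s..x, (x - t) ^ (α - 1) * (t - s) ^ (β - 1)
      = Real.Gamma α * Real.Gamma β / Real.Gamma (α + β) * (x - s) ^ (α + β - 1) := by
  have hc : (0:ℝ) < x - s := sub_pos.2 hsx
  rw [subst_aux (fun t => (t - s) ^ (β - 1)) hsx]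
  have h4 : EqOn (fun u : ℝ => (1 - u) ^ (α - 1) * (s + (x - s) * u - s) ^ (β - 1))
      (fun u : ℝ => (x - s) ^ (β - 1) * (u ^ (β - 1) * (1 - u) ^ (α - 1))) (uIcc 0 1) := by
    intro u hu
    rw [uIcc_of_le (by norm_num : (0:ℝ) ≤ 1)] at hu
    have e1 : s + (x - s) * u - s = (x - s) * u := by ring
    show (1 - u) ^ (α - 1) * (s + (x - s) * u - s) ^ (β - 1)
      = (x - s) ^ (β - 1) * (u ^ (β - 1) * (1 - u) ^ (α - 1))
    rw [e1, Real.mul_rpow hc.le hu.1]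
    ring
  rw [intervalIntegral.integral_congr h4, intervalIntegral.integral_const_mul,
    beta_real hα hβ, ← mul_assoc]
  rw [show (x - s) ^ α * (x - s) ^ (β - 1) = (x - s) ^ (α + β - 1) by
    rw [← Real.rpow_add hc]; ring_nf]
  ring

lemma integral_sub_rpow {β : ℝ} (hβ : 0 < β) {a t : ℝ} :
    ∫ s in a..t, (t - s) ^ (β - 1) = (t - a) ^ β / β := by
  rw [intervalIntegral.integral_comp_sub_left (fun y => y ^ (β - 1)) t, sub_self,
    integral_rpow (Or.inl (by linarith))]
  rw [show β - 1 + 1 = β by ring, Real.zero_rpow hβ.ne']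
  ring

lemma rpow_meas (c : ℝ) : Measurable fun y : ℝ => y ^ c :=
  measurable_of_continuousOn_compl_singleton 0 fun y hy =>
    (Real.continuousAt_rpow_const y c (Or.inl hy)).continuousWithinAt

lemma hkerInt {γ : ℝ} (hγ : 0 < γ) (z u v : ℝ) :
    IntervalIntegrable (fun t => (z - t) ^ (γ - 1)) volume u v := by
  have := (intervalIntegral.intervalIntegrable_rpow' (a := z - u) (b := z - v)
    (by linarith : (-1:ℝ) < γ - 1)).comp_sub_left z
  simpa using this

/-- The Dirichlet / semigroup formula for Riemann–Liouville integrals, proved via Fubini. -/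
lemma dirichlet {α β : ℝ} (hα : 0 < α) (hβ : 0 < β) {h : ℝ → ℝ} (hcont : Continuous h)
    {M : ℝ} (hM : ∀ y, |h y| ≤ M) {a x : ℝ} (hax : a ≤ x) :
    ∫ t in a..x, (x - t) ^ (α - 1) * ∫ s in a..t, (t - s) ^ (β - 1) * h s
      = (Real.Gamma α * Real.Gamma β / Real.Gamma (α + β)) *
        ∫ s in a..x, (x - s) ^ (α + β - 1) * h s := by
  rcases eq_or_lt_of_le hax with rfl | hax'
  · simp
  have hM0 : 0 ≤ M := le_trans (abs_nonneg _) (hM 0)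
  set μ := volume.restrict (Ioc a x) with hμ
  set P : ℝ × ℝ → ℝ := fun q => Set.indicator {q : ℝ × ℝ | q.2 ≤ q.1}
    (fun q => (x - q.1) ^ (α - 1) * ((q.1 - q.2) ^ (β - 1) * h q.2)) q with hP
  have hPmeas : Measurable P := by
    apply Measurable.indicator _ (measurableSet_le measurable_snd measurable_fst)
    exact (((rpow_meas (α - 1)).comp (measurable_const.sub measurable_fst)).mul
      (((rpow_meas (β - 1)).comp (measurable_fst.sub measurable_snd)).mul
        (hcont.measurable.comp measurable_snd)))
  have slice_eq : ∀ t : ℝ, (fun s => P (t, s))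
      = Set.indicator (Iic t) (fun s => (x - t) ^ (α - 1) * ((t - s) ^ (β - 1) * h s)) := by
    intro t; funext s
    by_cases hs : s ≤ t <;> simp [hP, Set.indicator_apply, hs]
  have slice_int : ∀ t ∈ Ioc a x, IntegrableOn
      (fun s => (x - t) ^ (α - 1) * ((t - s) ^ (β - 1) * h s)) (Ioc a t) volume := by
    intro t ht
    have h1 : IntervalIntegrable (fun s => (t - s) ^ (β - 1) * h s) volume a t :=
      (hkerInt hβ t a t).mul_continuousOn hcont.continuousOn
    exact (intervalIntegrable_iff_integrableOn_Ioc_of_le ht.1.le).1 (h1.const_mul _)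
  have inter_eq : ∀ t ∈ Ioc a x, Iic t ∩ Ioc a x = Ioc a t := by
    intro t ht
    ext y; simp only [mem_inter_iff, mem_Iic, mem_Ioc]
    constructor
    · rintro ⟨h1, h2, h3⟩; exact ⟨h2, h1⟩
    · rintro ⟨h1, h2⟩; exact ⟨h2, h1, le_trans h2 ht.2⟩
  have int_slices : ∀ᵐ t ∂μ, Integrable (fun s => P (t, s)) μ := by
    filter_upwards [ae_restrict_mem measurableSet_Ioc] with t ht
    rw [slice_eq t, hμ, integrable_indicator_iff measurableSet_Iic, IntegrableOn,
      Measure.restrict_restrict measurableSet_Iic, inter_eq t ht]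
    exact slice_int t ht
  have slice_val : ∀ t ∈ Ioc a x, ∫ s, P (t, s) ∂μ
      = (x - t) ^ (α - 1) * ∫ s in a..t, (t - s) ^ (β - 1) * h s := by
    intro t ht
    rw [slice_eq t, hμ, setIntegral_indicator measurableSet_Iic,
      inter_comm, inter_eq t ht, ← intervalIntegral.integral_of_le ht.1.le,
      intervalIntegral.integral_const_mul]
  have norm_bound : Integrable (fun t => ∫ s, ‖P (t, s)‖ ∂μ) μ := by
    have hgi : IntegrableOn (fun t => (x - t) ^ (α - 1) * (M * ((x - a) ^ β / β)))
        (Ioc a x) volume :=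
      (intervalIntegrable_iff_integrableOn_Ioc_of_le hax).1 ((hkerInt hα x a x).mul_const _)
    apply Integrable.mono' hgi (hPmeas.norm.aestronglyMeasurable.integral_prod_right')
    filter_upwards [ae_restrict_mem measurableSet_Ioc] with t ht
    rw [Real.norm_of_nonneg (integral_nonneg fun s => norm_nonneg _)]
    have hxt : (0:ℝ) ≤ x - t := sub_nonneg.2 ht.2
    have step1 : ∫ s, ‖P (t, s)‖ ∂μ
        = ∫ s in Ioc a t, ‖(x - t) ^ (α - 1) * ((t - s) ^ (β - 1) * h s)‖ ∂volume := by
      rw [hμ]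
      have : (fun s => ‖P (t, s)‖) = Set.indicator (Iic t)
          (fun s => ‖(x - t) ^ (α - 1) * ((t - s) ^ (β - 1) * h s)‖) := by
        funext s
        rw [congrFun (slice_eq t) s]
        exact norm_indicator_eq_indicator_norm _ s
      rw [this, setIntegral_indicator measurableSet_Iic, inter_comm, inter_eq t ht]
    rw [step1]
    have step2 : ∫ s in Ioc a t, ‖(x - t) ^ (α - 1) * ((t - s) ^ (β - 1) * h s)‖ ∂volume
        ≤ ∫ s in Ioc a t, (x - t) ^ (α - 1) * ((t - s) ^ (β - 1) * M) ∂volume := by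
      apply setIntegral_mono_on ((slice_int t ht).norm)
        ((intervalIntegrable_iff_integrableOn_Ioc_of_le ht.1.le).1
          (((hkerInt hβ t a t).mul_const M).const_mul _))
        measurableSet_Ioc
      intro s hs
      have hts : (0:ℝ) ≤ t - s := sub_nonneg.2 hs.2
      rw [norm_mul, norm_mul, Real.norm_of_nonneg (Real.rpow_nonneg hxt _),
        Real.norm_of_nonneg (Real.rpow_nonneg hts _), Real.norm_eq_abs]
      exact mul_le_mul_of_nonneg_left
        (mul_le_mul_of_nonneg_left (hM s) (Real.rpow_nonneg hts _))
        (Real.rpow_nonneg hxt _)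
    have step3 : ∫ s in Ioc a t, (x - t) ^ (α - 1) * ((t - s) ^ (β - 1) * M) ∂volume
        = (x - t) ^ (α - 1) * (M * ((t - a) ^ β / β)) := by
      rw [← intervalIntegral.integral_of_le ht.1.le, intervalIntegral.integral_const_mul]
      congr 1
      rw [intervalIntegral.integral_mul_const, integral_sub_rpow hβ]
      ring
    have step4 : (x - t) ^ (α - 1) * (M * ((t - a) ^ β / β))
        ≤ (x - t) ^ (α - 1) * (M * ((x - a) ^ β / β)) := by
      apply mul_le_mul_of_nonneg_left _ (Real.rpow_nonneg hxt _)
      apply mul_le_mul_of_nonneg_left _ hM0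
      exact (div_le_div_iff_of_pos_right hβ).2
        (Real.rpow_le_rpow (sub_nonneg.2 ht.1.le) (by linarith [ht.2]) hβ.le)
    calc ∫ s in Ioc a t, ‖(x - t) ^ (α - 1) * ((t - s) ^ (β - 1) * h s)‖ ∂volume
        ≤ ∫ s in Ioc a t, (x - t) ^ (α - 1) * ((t - s) ^ (β - 1) * M) ∂volume := step2
      _ = (x - t) ^ (α - 1) * (M * ((t - a) ^ β / β)) := step3
      _ ≤ (x - t) ^ (α - 1) * (M * ((x - a) ^ β / β)) := step4
  have hPint : Integrable P (μ.prod μ) :=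
    (integrable_prod_iff hPmeas.aestronglyMeasurable).2 ⟨int_slices, norm_bound⟩
  have swap := integral_integral_swap (f := fun t s => P (t, s)) (μ := μ) (ν := μ) hPint
  have hae : ∀ᵐ s : ℝ ∂(volume : Measure ℝ), s ≠ x := by
    rw [ae_iff]
    have : {s : ℝ | ¬s ≠ x} = {x} := by ext y; simp [not_not]
    rw [this]
    exact Real.volume_singleton
  calc ∫ t in a..x, (x - t) ^ (α - 1) * ∫ s in a..t, (t - s) ^ (β - 1) * h s
      = ∫ t in Ioc a x, ((x - t) ^ (α - 1) * ∫ s in a..t, (t - s) ^ (β - 1) * h s) ∂volume :=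
        intervalIntegral.integral_of_le hax
    _ = ∫ t, (∫ s, P (t, s) ∂μ) ∂μ := by
        symm
        refine setIntegral_congr_fun measurableSet_Ioc fun t ht => slice_val t ht
    _ = ∫ s, (∫ t, P (t, s) ∂μ) ∂μ := swap
    _ = ∫ s in Ioc a x, (Real.Gamma α * Real.Gamma β / Real.Gamma (α + β) *
          ((x - s) ^ (α + β - 1) * h s)) ∂volume := by
        apply setIntegral_congr_ae measurableSet_Ioc
        filter_upwards [hae] with s hsx hs
        have hsx' : s < x := lt_of_le_of_ne hs.2 hsx
        have ind : (fun t => P (t, s)) = Set.indicator (Ici s)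
            (fun t => (x - t) ^ (α - 1) * ((t - s) ^ (β - 1) * h s)) := by
          funext t
          by_cases hts : s ≤ t <;> simp [hP, Set.indicator_apply, hts]
        have inter2 : Ioc a x ∩ Ici s = Icc s x := by
          ext y; simp only [mem_inter_iff, mem_Ioc, mem_Ici, mem_Icc]
          constructor
          · rintro ⟨⟨h1, h2⟩, h3⟩; exact ⟨h3, h2⟩
          · rintro ⟨h1, h2⟩; exact ⟨⟨lt_of_lt_of_le hs.1 h1, h2⟩, h1⟩
        rw [ind, setIntegral_indicator measurableSet_Ici, inter2,
          integral_Icc_eq_integral_Ioc, ← intervalIntegral.integral_of_le hsx'.le]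
        have heqon : EqOn (fun t => (x - t) ^ (α - 1) * ((t - s) ^ (β - 1) * h s))
            (fun t => ((x - t) ^ (α - 1) * (t - s) ^ (β - 1)) * h s) (uIcc s x) :=
          fun t _ => by ring
        rw [intervalIntegral.integral_congr heqon, intervalIntegral.integral_mul_const,
          kernel_integral hα hβ hsx']
        ring
    _ = (Real.Gamma α * Real.Gamma β / Real.Gamma (α + β)) *
          ∫ s in a..x, (x - s) ^ (α + β - 1) * h s := by
        rw [integral_const_mul, ← intervalIntegral.integral_of_le hax]

/-- Continuity of the Riemann–Liouville integral of a bounded continuous function. -/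
lemma rlInt_continuousOn {α : ℝ} (hα : 0 < α) {h : ℝ → ℝ} (hcont : Continuous h)
    {M : ℝ} (hM : ∀ y, |h y| ≤ M) (a : ℝ) :
    ContinuousOn (rlInt a α h) (Ici a) := by
  have hΘ : Continuous fun x => ∫ u in (0:ℝ)..1, (1 - u) ^ (α - 1) * h (a + (x - a) * u) := by
    apply intervalIntegral.continuous_of_dominated_interval
      (bound := fun u => (1 - u) ^ (α - 1) * M)
    · intro x
      exact (((rpow_meas (α - 1)).comp (measurable_const.sub measurable_id)).mul
        (hcont.measurable.comp
          (measurable_const.add (measurable_id.const_mul _)))).aestronglyMeasurable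
    · intro x
      filter_upwards with u hu
      rw [uIoc_of_le (by norm_num : (0:ℝ) ≤ 1)] at hu
      have h1u : (0:ℝ) ≤ 1 - u := by linarith [hu.2]
      rw [norm_mul, Real.norm_of_nonneg (Real.rpow_nonneg h1u _), Real.norm_eq_abs]
      exact mul_le_mul_of_nonneg_left (hM _) (Real.rpow_nonneg h1u _)
    · have h1 : IntervalIntegrable (fun u : ℝ => (1 - u) ^ (α - 1)) volume 0 1 := by
        have := (intervalIntegral.intervalIntegrable_rpow' (a := (1:ℝ) - 0) (b := (1:ℝ) - 1)
          (by linarith : (-1:ℝ) < α - 1)).comp_sub_left 1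
        simpa using this
      exact h1.mul_const M
    · filter_upwards with u _
      exact continuous_const.mul (hcont.comp
        (continuous_const.add ((continuous_id.sub continuous_const).mul continuous_const)))
  have heq : EqOn (rlInt a α h) (fun x => (1 / Real.Gamma α) *
      ((x - a) ^ α * ∫ u in (0:ℝ)..1, (1 - u) ^ (α - 1) * h (a + (x - a) * u))) (Ici a) := by
    intro x hx
    rcases eq_or_lt_of_le (mem_Ici.1 hx) with rfl | hax
    · simp [rlInt, intervalIntegral.integral_same, sub_self, Real.zero_rpow hα.ne']
    · rw [rlInt, subst_aux h hax]
  exact ContinuousOn.congr (continuous_const.mul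
    (((continuous_id.sub continuous_const).rpow_const fun _ => Or.inr hα.le).mul
      hΘ)).continuousOn heq

/-- Two continuous functions with the same primitives on `[a,b]` coincide there. -/
lemma eq_of_integrals {a b : ℝ} (hab : a < b) {φ ψ : ℝ → ℝ}
    (hφ : ContinuousOn φ (Icc a b)) (hψ : ContinuousOn ψ (Icc a b))
    (heq : ∀ x ∈ Icc a b, ∫ t in a..x, φ t = ∫ t in a..x, ψ t) :
    ∀ x ∈ Icc a b, φ x = ψ x := by
  intro x hx
  have hIφ : IntervalIntegrable φ volume a x := by
    apply ContinuousOn.intervalIntegrable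
    rw [uIcc_of_le hx.1]
    exact hφ.mono (Icc_subset_Icc le_rfl hx.2)
  have hIψ : IntervalIntegrable ψ volume a x := by
    apply ContinuousOn.intervalIntegrable
    rw [uIcc_of_le hx.1]
    exact hψ.mono (Icc_subset_Icc le_rfl hx.2)
  rcases lt_or_eq_of_le hx.2 with hxb | rfl
  · have hmem : Icc a b ∈ nhdsWithin x (Ici x) := Icc_mem_nhdsGE_of_mem ⟨hx.1, hxb⟩
    have hmem' : Icc a b ∈ nhdsWithin x (Ioi x) :=
      nhdsWithin_mono x Ioi_subset_Ici_self hmem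
    have hsmφ : StronglyMeasurableAtFilter φ (nhdsWithin x (Ioi x)) volume :=
      ⟨Icc a b, hmem', hφ.aestronglyMeasurable measurableSet_Icc⟩
    have hsmψ : StronglyMeasurableAtFilter ψ (nhdsWithin x (Ioi x)) volume :=
      ⟨Icc a b, hmem', hψ.aestronglyMeasurable measurableSet_Icc⟩
    have d1 : HasDerivWithinAt (fun u => ∫ t in a..u, φ t) (φ x) (Ici x) x :=
      intervalIntegral.integral_hasDerivWithinAt_right hIφ hsmφ
        ((hφ x hx).mono_of_mem_nhdsWithin hmem')
    have d2 : HasDerivWithinAt (fun u => ∫ t in a..u, ψ t) (ψ x) (Ici x) x :=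
      intervalIntegral.integral_hasDerivWithinAt_right hIψ hsmψ
        ((hψ x hx).mono_of_mem_nhdsWithin hmem')
    have d2' : HasDerivWithinAt (fun u => ∫ t in a..u, φ t) (ψ x) (Ici x) x := by
      apply d2.congr_of_eventuallyEq _ (heq x hx)
      exact Filter.eventuallyEq_of_mem hmem fun u hu => heq u hu
    rw [← d1.derivWithin (uniqueDiffOn_Ici x x self_mem_Ici),
      ← d2'.derivWithin (uniqueDiffOn_Ici x x self_mem_Ici)]
  · have hmem : Icc a x ∈ nhdsWithin x (Iic x) := Icc_mem_nhdsLE_of_mem ⟨hab, le_rfl⟩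
    have hsmφ : StronglyMeasurableAtFilter φ (nhdsWithin x (Iic x)) volume :=
      ⟨Icc a x, hmem, hφ.aestronglyMeasurable measurableSet_Icc⟩
    have hsmψ : StronglyMeasurableAtFilter ψ (nhdsWithin x (Iic x)) volume :=
      ⟨Icc a x, hmem, hψ.aestronglyMeasurable measurableSet_Icc⟩
    have d1 : HasDerivWithinAt (fun u => ∫ t in a..u, φ t) (φ x) (Iic x) x :=
      intervalIntegral.integral_hasDerivWithinAt_right hIφ hsmφ
        ((hφ x hx).mono_of_mem_nhdsWithin hmem)
    have d2 : HasDerivWithinAt (fun u => ∫ t in a..u, ψ t) (ψ x) (Iic x) x :=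
      intervalIntegral.integral_hasDerivWithinAt_right hIψ hsmψ
        ((hψ x hx).mono_of_mem_nhdsWithin hmem)
    have d2' : HasDerivWithinAt (fun u => ∫ t in a..u, φ t) (ψ x) (Iic x) x := by
      apply d2.congr_of_eventuallyEq _ (heq x hx)
      exact Filter.eventuallyEq_of_mem hmem fun u hu => heq u hu
    rw [← d1.derivWithin (uniqueDiffOn_Iic x x self_mem_Iic),
      ← d2'.derivWithin (uniqueDiffOn_Iic x x self_mem_Iic)]

/-- Continuous extension of a function continuous on `[a,b]` to a bounded
continuous function on all of `ℝ`. -/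
lemma extend_exists {a b : ℝ} (hab : a ≤ b) {f : ℝ → ℝ} (hf : ContinuousOn f (Icc a b)) :
    ∃ g : ℝ → ℝ, Continuous g ∧ EqOn f g (Icc a b) ∧ ∃ M, ∀ y, |g y| ≤ M := by
  refine ⟨IccExtend hab ((Icc a b).restrict f), Continuous.Icc_extend' hf.restrict, ?_, ?_⟩
  · intro y hy
    exact (IccExtend_of_mem hab ((Icc a b).restrict f) hy).symm
  · obtain ⟨M, hM⟩ := isCompact_Icc.exists_bound_of_continuousOn
      (Continuous.Icc_extend' (h := hab) hf.restrict).continuousOn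
    refine ⟨M, fun y => ?_⟩
    have hmem : IccExtend hab ((Icc a b).restrict f) y ∈ range ((Icc a b).restrict f) := by
      rw [← IccExtend_range hab]
      exact mem_range_self y
    obtain ⟨⟨z, hz⟩, hzy⟩ := hmem
    rw [← hzy]
    have := hM z hz
    rw [IccExtend_of_mem hab _ hz] at this
    exact this

end AbelAux

open AbelAux

theorem abel_equation_solvability (a b n : ℝ) (hab : a < b)
    (hn1 : 0 < n) (hn2 : n < 1)
    (F : ℝ → ℝ) (hF : ContinuousOn F (Icc a b)) (hFa : F a = 0) :
    (∃ Φ : ℝ → ℝ, ContinuousOn Φ (Icc a b) ∧ Φ a = 0 ∧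
      ∀ x ∈ Icc a b, rlInt a n Φ x = F x) ↔
    (∃ g : ℝ → ℝ, ContinuousOn g (Icc a b) ∧ g a = 0 ∧
      ∀ x ∈ Icc a b, rlInt a (1 - n) F x = ∫ t in a..x, g t) := by
  have h1n : 0 < 1 - n := by linarith
  have hΓn : Real.Gamma n ≠ 0 := (Real.Gamma_pos_of_pos hn1).ne'
  have hΓ1n : Real.Gamma (1 - n) ≠ 0 := (Real.Gamma_pos_of_pos h1n).ne'
  constructor
  · rintro ⟨Φ, hΦc, hΦa, hΦeq⟩
    obtain ⟨Φ', hΦ'c, hΦeqOn, M, hM⟩ := extend_exists hab.le hΦc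
    refine ⟨Φ', hΦ'c.continuousOn, ?_, fun x hx => ?_⟩
    · rw [← hΦeqOn (left_mem_Icc.2 hab.le)]; exact hΦa
    · have key : ∀ t ∈ Icc a b, F t
          = (1 / Real.Gamma n) * ∫ s in a..t, (t - s) ^ (n - 1) * Φ' s := by
        intro t ht
        rw [← hΦeq t ht, rlInt]
        congr 1
        refine intervalIntegral.integral_congr fun s hs => ?_
        rw [uIcc_of_le ht.1] at hs
        show (t - s) ^ (n - 1) * Φ s = (t - s) ^ (n - 1) * Φ' s
        rw [hΦeqOn ⟨hs.1, hs.2.trans ht.2⟩]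
      calc rlInt a (1 - n) F x
          = (1 / Real.Gamma (1 - n)) * ∫ t in a..x, (x - t) ^ (1 - n - 1) *
              ((1 / Real.Gamma n) * ∫ s in a..t, (t - s) ^ (n - 1) * Φ' s) := by
            rw [rlInt]
            congr 1
            refine intervalIntegral.integral_congr fun t ht => ?_
            rw [uIcc_of_le hx.1] at ht
            show (x - t) ^ (1 - n - 1) * F t = (x - t) ^ (1 - n - 1) *
              ((1 / Real.Gamma n) * ∫ s in a..t, (t - s) ^ (n - 1) * Φ' s)
            rw [key t ⟨ht.1, ht.2.trans hx.2⟩]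
        _ = (1 / Real.Gamma (1 - n)) * ((1 / Real.Gamma n) *
              ∫ t in a..x, (x - t) ^ (1 - n - 1) *
                ∫ s in a..t, (t - s) ^ (n - 1) * Φ' s) := by
            have hcm := intervalIntegral.integral_const_mul (a := a) (b := x) (μ := volume)
              (1 / Real.Gamma n) (fun t => (x - t) ^ (1 - n - 1) *
                ∫ s in a..t, (t - s) ^ (n - 1) * Φ' s)
            rw [← hcm]
            congr 1
            refine intervalIntegral.integral_congr fun t _ => ?_
            show (x - t) ^ (1 - n - 1) *
                ((1 / Real.Gamma n) * ∫ s in a..t, (t - s) ^ (n - 1) * Φ' s)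
              = (1 / Real.Gamma n) *
                ((x - t) ^ (1 - n - 1) * ∫ s in a..t, (t - s) ^ (n - 1) * Φ' s)
            ring
        _ = ∫ t in a..x, Φ' t := by
            rw [dirichlet h1n hn1 hΦ'c hM hx.1]
            rw [show (1 : ℝ) - n + n = 1 by ring, Real.Gamma_one]
            rw [show (1:ℝ) - 1 = 0 by norm_num]
            simp only [Real.rpow_zero, one_mul, div_one]
            field_simp
  · rintro ⟨g, hgc, hga, hgeq⟩
    obtain ⟨g', hg'c, hgEq, Mg, hMg⟩ := extend_exists hab.le hgc
    obtain ⟨F', hF'c, hFEq, MF, hMF⟩ := extend_exists hab.le hF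
    refine ⟨g', hg'c.continuousOn, ?_, ?_⟩
    · rw [← hgEq (left_mem_Icc.2 hab.le)]; exact hga
    · have hyp : ∀ t ∈ Icc a b, ∫ s in a..t, (t - s) ^ (1 - n - 1) * F' s
          = Real.Gamma (1 - n) * ∫ s in a..t, g' s := by
        intro t ht
        have h0 := hgeq t ht
        rw [rlInt] at h0
        have e1 : ∫ s in a..t, (t - s) ^ (1 - n - 1) * F s
            = ∫ s in a..t, (t - s) ^ (1 - n - 1) * F' s := by
          refine intervalIntegral.integral_congr fun s hs => ?_
          rw [uIcc_of_le ht.1] at hs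
          show (t - s) ^ (1 - n - 1) * F s = (t - s) ^ (1 - n - 1) * F' s
          rw [hFEq ⟨hs.1, hs.2.trans ht.2⟩]
        have e2 : ∫ s in a..t, g s = ∫ s in a..t, g' s := by
          refine intervalIntegral.integral_congr fun s hs => ?_
          rw [uIcc_of_le ht.1] at hs
          show g s = g' s
          rw [hgEq ⟨hs.1, hs.2.trans ht.2⟩]
        rw [e1, e2] at h0
        rw [← h0]
        field_simp
      have key : ∀ x ∈ Icc a b, ∫ t in a..x, F' t = ∫ t in a..x, rlInt a n g' t := by
        intro x hx
        have hax := hx.1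
        have E3 := dirichlet hn1 h1n hF'c hMF hax
        rw [show n + (1 - n) = 1 by ring, Real.Gamma_one,
          show (1:ℝ) - 1 = 0 by norm_num] at E3
        simp only [Real.rpow_zero, one_mul, div_one] at E3
        have E3l : ∫ t in a..x, (x - t) ^ (n - 1) * ∫ s in a..t, (t - s) ^ (1 - n - 1) * F' s
            = Real.Gamma (1 - n) * ∫ t in a..x, (x - t) ^ (n - 1) *
                ∫ s in a..t, (t - s) ^ (1 - 1 : ℝ) * g' s := by
          have hcm := intervalIntegral.integral_const_mul (a := a) (b := x) (μ := volume)
            (Real.Gamma (1 - n)) (fun t => (x - t) ^ (n - 1) *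
              ∫ s in a..t, (t - s) ^ (1 - 1 : ℝ) * g' s)
          rw [← hcm]
          refine intervalIntegral.integral_congr fun t ht => ?_
          rw [uIcc_of_le hax] at ht
          have ht' : t ∈ Icc a b := ⟨ht.1, ht.2.trans hx.2⟩
          show (x - t) ^ (n - 1) * ∫ s in a..t, (t - s) ^ (1 - n - 1) * F' s
            = Real.Gamma (1 - n) * ((x - t) ^ (n - 1) *
                ∫ s in a..t, (t - s) ^ (1 - 1 : ℝ) * g' s)
          rw [hyp t ht', show ∫ s in a..t, (t - s) ^ ((1:ℝ) - 1) * g' s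
              = ∫ s in a..t, g' s from intervalIntegral.integral_congr fun s _ => by
            show (t - s) ^ ((1:ℝ) - 1) * g' s = g' s
            rw [show (1:ℝ) - 1 = 0 by norm_num, Real.rpow_zero, one_mul]]
          ring
        have E4 := dirichlet hn1 one_pos hg'c hMg hax
        rw [Real.Gamma_one, show n + 1 - 1 = n by ring] at E4
        have E1side : ∫ t in a..x, rlInt a n g' t
            = (1 / Real.Gamma n) * ∫ t in a..x, (x - t) ^ (1 - 1 : ℝ) *
                ∫ s in a..t, (t - s) ^ (n - 1) * g' s := by
          have hcm := intervalIntegral.integral_const_mul (a := a) (b := x) (μ := volume)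
            (1 / Real.Gamma n) (fun t => (x - t) ^ (1 - 1 : ℝ) *
              ∫ s in a..t, (t - s) ^ (n - 1) * g' s)
          rw [← hcm]
          refine intervalIntegral.integral_congr fun t _ => ?_
          show rlInt a n g' t = (1 / Real.Gamma n) * ((x - t) ^ ((1:ℝ) - 1) *
            ∫ s in a..t, (t - s) ^ (n - 1) * g' s)
          rw [rlInt, show (1:ℝ) - 1 = 0 by norm_num, Real.rpow_zero, one_mul]
        have E5 := dirichlet one_pos hn1 hg'c hMg hax
        rw [Real.Gamma_one, show (1:ℝ) + n - 1 = n by ring,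
          show (1:ℝ) + n = n + 1 by ring] at E5
        have hΓn1 : Real.Gamma (n + 1) ≠ 0 := (Real.Gamma_pos_of_pos (by linarith)).ne'
        have comb : Real.Gamma n * Real.Gamma (1 - n) * ∫ s in a..x, F' s
            = Real.Gamma (1 - n) * (Real.Gamma n * 1 / Real.Gamma (n + 1) *
                ∫ s in a..x, (x - s) ^ n * g' s) := by
          rw [← E4, ← E3l, E3]
        have comb2 : Real.Gamma n * (∫ s in a..x, F' s)
            = Real.Gamma n * (1 / Real.Gamma (n + 1) * ∫ s in a..x, (x - s) ^ n * g' s) := by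
          apply mul_left_cancel₀ hΓ1n
          calc Real.Gamma (1 - n) * (Real.Gamma n * ∫ s in a..x, F' s)
              = Real.Gamma n * Real.Gamma (1 - n) * ∫ s in a..x, F' s := by ring
            _ = Real.Gamma (1 - n) * (Real.Gamma n * 1 / Real.Gamma (n + 1) *
                  ∫ s in a..x, (x - s) ^ n * g' s) := comb
            _ = Real.Gamma (1 - n) * (Real.Gamma n *
                  (1 / Real.Gamma (n + 1) * ∫ s in a..x, (x - s) ^ n * g' s)) := by ring
        have hsimp := mul_left_cancel₀ hΓn comb2
        rw [E1side, E5, hsimp]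
        field_simp
      have hkcont : ContinuousOn (rlInt a n g') (Icc a b) :=
        (rlInt_continuousOn hn1 hg'c hMg a).mono fun y hy => hy.1
      have final := eq_of_integrals hab hF'c.continuousOn hkcont key
      intro x hx
      rw [hFEq hx]
      exact (final x hx).symm
end

section
/- Let $a < b$ be real numbers and $n > 0$. Let $f \in L^1(\mathbb{R})$ be a real-valued integrable function with support contained in $[a,b]$, let $F(x) := \int_{-\infty}^x f(t)\,dt$, and let $\phi_n(u) := u^{n-1}$ for $0 < u \le b-a$ and $\phi_n(u) := 0$ otherwise. Then for every complex-valued Schwartz function $\varphi$ on $\mathbb{R}$, $\int_{\mathbb{R}} (\phi_n * f)(x)\, \widehat{\varphi}(x)\,dx = \int_{\mathbb{R}} (\phi_n * F)(x)\, \widehat{\eta\varphi}(x)\,dx$, where $\widehat{\varphi}(x) := \int_{\mathbb{R}} e^{-2\pi i x t} \varphi(t)\,dt$ is the Fourier transform and $(\eta\varphi)(s) := 2\pi i s\, \varphi(s)$; all the integrals converge absolutely. (This states that the Fourier transform of $\mathcal{J}_a^n f$, as a tempered distribution, equals $2\pi i s$ times the Fourier transform of $\mathcal{J}_a^n F$;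 it is the paper's Proposition on the Fourier transform of the Riemann–Liouville fractional integral, stated for integrable $f$, a subspace of $D_{HK}$.) -/
open MeasureTheory Set

/-- The kernel `φ_n(u) = u^{n-1}` for `0 < u ≤ b - a`, and `0` otherwise. -/
noncomputable def rlKernel (a b n : ℝ) (u : ℝ) : ℝ :=
  if 0 < u ∧ u ≤ b - a then u ^ (n - 1) else 0

/-- Convolution of two real functions on `ℝ` (with respect to Lebesgue measure). -/
noncomputable def convR (g f : ℝ → ℝ) (x : ℝ) : ℝ :=
  ∫ y, g (x - y) * f y

open Filter Complex Topology
open scoped FourierTransform Convolution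

private lemma integral_ofReal_complex {α : Type*} [MeasurableSpace α] {μ : MeasureTheory.Measure α}
    (f : α → ℝ) : ((∫ x, f x ∂μ : ℝ) : ℂ) = ∫ x, ((f x : ℝ) : ℂ) ∂μ :=
  (integral_ofReal (𝕜 := ℂ)).symm

theorem fourier_transform_of_rl_integral (a b n : ℝ) (hab : a < b) (hn : 0 < n)
    (f : ℝ → ℝ) (hf : Integrable f) (hsupp : Function.support f ⊆ Icc a b)
    (F : ℝ → ℝ) (hF : ∀ x, F x = ∫ t in Iic x, f t) :
    ∀ φ : SchwartzMap ℝ ℂ,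
      Integrable (fun x =>
        (convR (rlKernel a b n) f x : ℂ) * FourierTransform.fourier (fun t => φ t) x) ∧
      Integrable (fun x =>
        (convR (rlKernel a b n) F x : ℂ) *
          FourierTransform.fourier (fun s => ((2 * Real.pi * s : ℝ) : ℂ) * Complex.I * φ s) x) ∧
      ∫ x, (convR (rlKernel a b n) f x : ℂ) * FourierTransform.fourier (fun t => φ t) x =
        ∫ x, (convR (rlKernel a b n) F x : ℂ) *
          FourierTransform.fourier (fun s => ((2 * Real.pi * s : ℝ) : ℂ) * Complex.I * φ s) x := by
  intro φ
  set K : ℝ → ℝ := rlKernel a b n with hK_def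
  set h : ℝ → ℂ := fun x => FourierTransform.fourier (fun t => φ t) x with hh_def
  set G : ℝ → ℂ :=
    fun x => FourierTransform.fourier (fun s => ((2 * Real.pi * s : ℝ) : ℂ) * Complex.I * φ s) x
    with hG_def
  -- kernel facts
  have hba : (0:ℝ) ≤ b - a := by linarith
  have hker_ind : K = (Ioc (0:ℝ) (b-a)).indicator (fun u => u ^ (n-1)) := by
    funext u; simp [hK_def, rlKernel, indicator_apply, mem_Ioc]
  have hker_int : Integrable K := by
    rw [hker_ind, integrable_indicator_iff measurableSet_Ioc]
    have h := intervalIntegral.intervalIntegrable_rpow' (a := 0) (b := b-a)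
      (by linarith : (-1:ℝ) < n - 1)
    rwa [intervalIntegrable_iff_integrableOn_Ioc_of_le hba] at h
  have hker_meas : Measurable K := by
    rw [hker_ind]
    exact (measurable_id.pow measurable_const).indicator measurableSet_Ioc
  -- F facts
  have hF_cont : Continuous F := by
    have key : F = fun x => (∫ t in Iic 0, f t) + ∫ t in (0:ℝ)..x, f t := by
      funext x
      rw [hF x, ← intervalIntegral.integral_Iic_sub_Iic hf.integrableOn hf.integrableOn]
      ring
    rw [key]
    exact continuous_const.add (intervalIntegral.continuous_primitive
      (fun a b => hf.intervalIntegrable) 0)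
  have hF_bdd : ∀ x, |F x| ≤ ∫ t, |f t| := by
    intro x
    rw [hF x, ← Real.norm_eq_abs]
    refine (norm_integral_le_integral_norm _).trans ?_
    simp only [Real.norm_eq_abs]
    exact setIntegral_le_integral hf.abs (ae_of_all _ fun t => abs_nonneg _)
  -- Fourier transform facts
  have hS_cont : Continuous h := (SchwartzMap.fourierTransformCLM ℂ φ).continuous
  have hh_bdd : ∀ x, ‖h x‖ ≤
      SchwartzMap.seminorm ℝ 0 0 (SchwartzMap.fourierTransformCLM ℂ φ) :=
    fun x => (SchwartzMap.fourierTransformCLM ℂ φ).norm_le_seminorm ℝ x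
  have hφm : Integrable (fun t : ℝ => t • (φ t)) := by
    refine (φ.integrable_pow_mul volume 1).mono'
      ((continuous_id.smul φ.continuous).aestronglyMeasurable) ?_
    refine ae_of_all _ fun t => ?_
    simp [norm_smul]
  have hderiv : ∀ x, HasDerivAt h (-(G x)) x := by
    intro x
    have H := Real.hasDerivAt_fourier φ.integrable hφm x
    have heq : 𝓕 (fun t : ℝ => (-2 * ↑Real.pi * Complex.I * ↑t) • φ t) x = -(G x) := by
      show 𝓕 (fun t : ℝ => (-2 * ↑Real.pi * Complex.I * ↑t) • φ t) x
        = -(FourierTransform.fourier (fun s => ((2 * Real.pi * s : ℝ) : ℂ) * Complex.I * φ s) x)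
      rw [Real.fourier_real_eq, Real.fourier_real_eq, ← integral_neg]
      congr 1
      funext v
      simp only [Circle.smul_def, smul_eq_mul]
      push_cast
      ring
    rw [heq] at H
    exact H
  set dS : SchwartzMap ℝ ℂ := SchwartzMap.derivCLM ℝ ℂ (SchwartzMap.fourierTransformCLM ℂ φ)
    with hdS_def
  have hG_eq : G = fun x => -(dS x) := by
    funext x
    have h1 : deriv h x = -(G x) := (hderiv x).deriv
    have h2 : dS x = deriv h x := by
      rw [hdS_def, SchwartzMap.derivCLM_apply]
      rfl
    rw [h2, h1, neg_neg]
  have hG_int : Integrable G := by rw [hG_eq]; exact dS.integrable.neg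
  have hG_cont : Continuous G := by rw [hG_eq]; exact dS.continuous.neg
  have hCG : ∀ x, ‖G x‖ ≤ SchwartzMap.seminorm ℝ 0 0 dS := by
    intro x
    rw [hG_eq]
    simpa using dS.norm_le_seminorm ℝ x
  have hh_tendsto : Tendsto h atTop (𝓝 0) :=
    (zero_at_infty (SchwartzMap.fourierTransformCLM ℂ φ)).mono_left atTop_le_cocompact
  have hkey : ∀ r : ℝ, ∫ x in Ioi r, G x = h r := by
    intro r
    have H := integral_Ioi_of_hasDerivAt_of_tendsto' (f := h) (f' := fun x => -(G x)) (a := r)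
      (fun x _ => hderiv x) hG_int.neg.integrableOn hh_tendsto
    rw [integral_neg, zero_sub, neg_inj] at H
    exact H
  have hkeyIci : ∀ r : ℝ, ∫ x in Ici r, G x = h r := fun r => by
    rw [integral_Ici_eq_integral_Ioi]; exact hkey r
  -- convolution bridge
  have hbridge : ∀ (g : ℝ → ℝ) (x : ℝ),
      convR K g x = (K ⋆[ContinuousLinearMap.mul ℝ ℝ] g) x := by
    intro g x
    have h := integral_sub_left_eq_self (fun t => K t * g (x - t)) volume x
    simp only [sub_sub_cancel] at h
    rw [convolution]
    simp only [ContinuousLinearMap.mul_apply']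
    rw [← h]
    rfl
  have hconv_f : Integrable (fun x => convR K f x) := by
    have h1 : Integrable (K ⋆[ContinuousLinearMap.mul ℝ ℝ] f) :=
      hker_int.integrable_convolution _ hf
    exact h1.congr (ae_of_all _ fun x => (hbridge f x).symm)
  have hKF_cont : Continuous (fun x => convR K F x) := by
    have hb : BddAbove (range fun x => ‖F x‖) := by
      refine ⟨∫ t, |f t|, ?_⟩
      rintro y ⟨x, rfl⟩
      simpa [Real.norm_eq_abs] using hF_bdd x
    have h1 := hb.continuous_convolution_right_of_integrable
      (ContinuousLinearMap.mul ℝ ℝ) hker_int hF_cont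
    exact h1.congr fun x => (hbridge F x).symm
  have hKF_bdd : ∀ x, |convR K F x| ≤ (∫ u, |K u|) * (∫ t, |f t|) := by
    intro x
    rw [convR, ← Real.norm_eq_abs]
    refine (norm_integral_le_integral_norm _).trans ?_
    have hmaj : Integrable (fun y => |K (x - y)| * (∫ t, |f t|)) :=
      (hker_int.abs.comp_sub_left x).mul_const _
    calc ∫ y, ‖K (x-y) * F y‖
        ≤ ∫ y, |K (x-y)| * (∫ t, |f t|) := by
          refine integral_mono_of_nonneg (ae_of_all _ fun y => norm_nonneg _) hmaj
            (ae_of_all _ fun y => ?_)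
          have hy := mul_le_mul_of_nonneg_left (hF_bdd y) (abs_nonneg (K (x - y)))
          simpa [Real.norm_eq_abs, abs_mul] using hy
      _ = (∫ u, |K u|) * (∫ t, |f t|) := by
          rw [integral_mul_const]
          congr 1
          exact integral_sub_left_eq_self (fun u => |K u|) volume x
  -- the two integrability claims
  have claim1 : Integrable (fun x => (convR K f x : ℂ) * h x) := by
    have h1 := (hconv_f.ofReal (μ := volume)).bdd_mul hS_cont.aestronglyMeasurable (ae_of_all _ hh_bdd)
    exact h1.congr (ae_of_all _ fun x => mul_comm _ _)
  have claim2 : Integrable (fun x => (convR K F x : ℂ) * G x) := by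
    refine hG_int.bdd_mul (Complex.continuous_ofReal.comp hKF_cont).aestronglyMeasurable
      (c := (∫ u, |K u|) * (∫ t, |f t|)) (ae_of_all _ fun x => ?_)
    simpa using hKF_bdd x
  -- the auxiliary functions Ψ and Θ
  set Ψ : ℝ → ℂ := fun y => ∫ x, (K (x - y) : ℂ) * h x with hΨ_def
  set Θ : ℝ → ℂ := fun y => ∫ x, (K (x - y) : ℂ) * G x with hΘ_def
  -- LHS
  have Hprod1 : Integrable (fun p : ℝ × ℝ => ((K (p.1 - p.2) * f p.2 : ℝ) : ℂ) * h p.1)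
      (volume.prod volume) := by
    have hbaseR : Integrable (fun p : ℝ × ℝ => f p.2 * K (p.1 - p.2)) (volume.prod volume) := by
      simpa using hf.convolution_integrand (ContinuousLinearMap.mul ℝ ℝ) hker_int
    have hbaseC : Integrable (fun p : ℝ × ℝ => ((K (p.1 - p.2) * f p.2 : ℝ) : ℂ))
        (volume.prod volume) := by
      refine hbaseR.ofReal.congr (ae_of_all _ fun p => ?_)
      push_cast
      exact mul_comm _ _
    have h1 := hbaseC.bdd_mul (hS_cont.comp continuous_fst).aestronglyMeasurable
      (ae_of_all _ fun p : ℝ × ℝ => hh_bdd p.1)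
    exact h1.congr (ae_of_all _ fun p => mul_comm _ _)
  have hLHS : (∫ x, (convR K f x : ℂ) * h x) = ∫ y, (f y : ℂ) * Ψ y := by
    have h1 : ∀ x, (convR K f x : ℂ) * h x
        = ∫ y, ((K (x - y) * f y : ℝ) : ℂ) * h x := by
      intro x
      rw [convR, integral_ofReal_complex, ← integral_mul_const]
    rw [integral_congr_ae (ae_of_all _ h1),
      integral_integral_swap (by exact Hprod1)]
    refine integral_congr_ae (ae_of_all _ fun y => ?_)
    calc ∫ x, ((K (x - y) * f y : ℝ) : ℂ) * h x
        = ∫ x, (f y : ℂ) * ((K (x - y) : ℂ) * h x) := by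
          refine integral_congr_ae (ae_of_all _ fun x => ?_)
          push_cast
          ring
      _ = (f y : ℂ) * Ψ y := integral_const_mul _ _
  -- RHS step 1
  have Hprod2 : Integrable (fun p : ℝ × ℝ => ((K (p.1 - p.2) * F p.2 : ℝ) : ℂ) * G p.1)
      (volume.prod volume) := by
    have hJ : Integrable (fun p : ℝ × ℝ => ‖G p.1‖ * |K (p.1 - p.2)|) (volume.prod volume) := by
      have h1 : Integrable (fun u => |K (-u)|) := hker_int.abs.comp_neg
      have h2 := hG_int.norm.convolution_integrand (ContinuousLinearMap.mul ℝ ℝ) h1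
      have h3 := h2.swap
      refine h3.congr (ae_of_all _ fun p => ?_)
      simp [Function.comp, neg_sub]
    have hmaj : Integrable (fun p : ℝ × ℝ => ‖G p.1‖ * |K (p.1 - p.2)| * (∫ t, |f t|))
        (volume.prod volume) := hJ.mul_const _
    refine Integrable.mono' hmaj ?_ (ae_of_all _ fun p => ?_)
    · exact ((Complex.measurable_ofReal.comp
        ((hker_meas.comp measurable_sub).mul (hF_cont.measurable.comp measurable_snd))).aestronglyMeasurable).mul
        (hG_cont.comp continuous_fst).aestronglyMeasurable
    · have h1 : |K (p.1 - p.2)| * |F p.2| ≤ |K (p.1 - p.2)| * (∫ t, |f t|) :=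
        mul_le_mul_of_nonneg_left (hF_bdd p.2) (abs_nonneg _)
      have h2 : |K (p.1 - p.2)| * |F p.2| * ‖G p.1‖
          ≤ |K (p.1 - p.2)| * (∫ t, |f t|) * ‖G p.1‖ :=
        mul_le_mul_of_nonneg_right h1 (norm_nonneg _)
      calc ‖((K (p.1 - p.2) * F p.2 : ℝ) : ℂ) * G p.1‖
          = |K (p.1 - p.2)| * |F p.2| * ‖G p.1‖ := by
            simp [abs_mul]
        _ ≤ |K (p.1 - p.2)| * (∫ t, |f t|) * ‖G p.1‖ := h2
        _ = ‖G p.1‖ * |K (p.1 - p.2)| * (∫ t, |f t|) := by ring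
  have hR1 : (∫ x, (convR K F x : ℂ) * G x) = ∫ y, (F y : ℂ) * Θ y := by
    have h1 : ∀ x, (convR K F x : ℂ) * G x
        = ∫ y, ((K (x - y) * F y : ℝ) : ℂ) * G x := by
      intro x
      rw [convR, integral_ofReal_complex, ← integral_mul_const]
    rw [integral_congr_ae (ae_of_all _ h1),
      integral_integral_swap (by exact Hprod2)]
    refine integral_congr_ae (ae_of_all _ fun y => ?_)
    calc ∫ x, ((K (x - y) * F y : ℝ) : ℂ) * G x
        = ∫ x, (F y : ℂ) * ((K (x - y) : ℂ) * G x) := by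
          refine integral_congr_ae (ae_of_all _ fun x => ?_)
          push_cast
          ring
      _ = (F y : ℂ) * Θ y := integral_const_mul _ _
  -- Θ facts
  have hΘ_conv : ∀ y, Θ y
      = ((fun u => (K (-u) : ℂ)) ⋆[ContinuousLinearMap.mul ℂ ℂ] G) y := by
    intro y
    have h := integral_sub_left_eq_self (fun t => (K (-t) : ℂ) * G (y - t)) volume y
    simp only [neg_sub, sub_sub_cancel] at h
    rw [convolution]
    simp only [ContinuousLinearMap.mul_apply']
    rw [← h]
  have hΘ_int : Integrable Θ := by
    have h1 : Integrable ((fun u => (K (-u) : ℂ)) ⋆[ContinuousLinearMap.mul ℂ ℂ] G) :=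
      ((hker_int.ofReal (𝕜 := ℂ)).comp_neg : Integrable (fun u => (K (-u) : ℂ))).integrable_convolution
        (ContinuousLinearMap.mul ℂ ℂ) hG_int
    exact h1.congr (ae_of_all _ fun y => (hΘ_conv y).symm)
  have hΘ_cont : Continuous Θ := by
    have hb : BddAbove (range fun x => ‖G x‖) := ⟨_, by rintro y ⟨x, rfl⟩; exact hCG x⟩
    have h1 := hb.continuous_convolution_right_of_integrable
      (ContinuousLinearMap.mul ℂ ℂ) (hker_int.ofReal.comp_neg) hG_cont
    exact h1.congr fun y => (hΘ_conv y).symm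
  -- RHS step 2
  have Hprod3 : Integrable (fun p : ℝ × ℝ => (((Iic p.1).indicator f p.2 : ℝ) : ℂ) * Θ p.1)
      (volume.prod volume) := by
    have hB : Integrable (fun p : ℝ × ℝ => (f p.2 : ℂ) * Θ p.1) (volume.prod volume) :=
      (hΘ_int.mul_prod hf.ofReal).congr (ae_of_all _ fun p => mul_comm _ _)
    have hSmeas : MeasurableSet {q : ℝ × ℝ | q.2 ≤ q.1} :=
      (isClosed_le continuous_snd continuous_fst).measurableSet
    have hrew : (fun p : ℝ × ℝ => (((Iic p.1).indicator f p.2 : ℝ) : ℂ) * Θ p.1)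
        = {q : ℝ × ℝ | q.2 ≤ q.1}.indicator (fun q => (f q.2 : ℂ) * Θ q.1) := by
      funext p
      simp only [indicator_apply, mem_Iic, mem_setOf_eq]
      by_cases hp : p.2 ≤ p.1 <;> simp [hp]
    rw [hrew]
    exact hB.indicator hSmeas
  have hR2 : (∫ y, (F y : ℂ) * Θ y) = ∫ s, (f s : ℂ) * ∫ y in Ici s, Θ y := by
    have h1 : ∀ y, (F y : ℂ) * Θ y = ∫ s, (((Iic y).indicator f s : ℝ) : ℂ) * Θ y := by
      intro y
      rw [hF y, ← integral_indicator measurableSet_Iic, integral_ofReal_complex, ← integral_mul_const]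
    rw [integral_congr_ae (ae_of_all _ h1),
      integral_integral_swap (by exact Hprod3)]
    refine integral_congr_ae (ae_of_all _ fun s => ?_)
    have h2 : ∀ y, (((Iic y).indicator f s : ℝ) : ℂ) * Θ y
        = (Ici s).indicator (fun y => (f s : ℂ) * Θ y) y := by
      intro y
      simp only [indicator_apply, mem_Iic, mem_Ici]
      by_cases hsy : s ≤ y <;> simp [hsy]
    show (∫ y, (((Iic y).indicator f s : ℝ) : ℂ) * Θ y) = (f s : ℂ) * ∫ y in Ici s, Θ y
    rw [integral_congr_ae (ae_of_all _ h2), integral_indicator measurableSet_Ici,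
      integral_const_mul]
  -- RHS step 3
  have hR3 : ∀ s : ℝ, (∫ y in Ici s, Θ y) = Ψ s := by
    intro s
    have hsub : ∀ y : ℝ, Θ y = ∫ v, (K v : ℂ) * G (v + y) := by
      intro y
      have h := integral_add_right_eq_self (μ := volume) (fun x => (K (x - y) : ℂ) * G x) y
      simp only [add_sub_cancel_right] at h
      exact h.symm
    have Hprod4 : Integrable (fun p : ℝ × ℝ => (K p.2 : ℂ) * G (p.2 + p.1))
        ((volume.restrict (Ici s)).prod volume) := by
      have q_int : Integrable (fun p : ℝ × ℝ => (K p.2 : ℂ) * G p.1) (volume.prod volume) :=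
        (hG_int.mul_prod hker_int.ofReal).congr (ae_of_all _ fun p => mul_comm _ _)
      have q_meas : AEStronglyMeasurable (fun p : ℝ × ℝ => (K p.2 : ℂ) * G p.1)
          (volume.prod volume) :=
        ((Complex.measurable_ofReal.comp (hker_meas.comp measurable_snd)).aestronglyMeasurable).mul
          (hG_cont.comp continuous_fst).aestronglyMeasurable
      have comp_int : Integrable (fun p : ℝ × ℝ => (K p.2 : ℂ) * G (p.1 + p.2))
          (volume.prod volume) := by
        have h2 := ((measurePreserving_add_prod (volume : Measure ℝ) volume).integrable_comp
          q_meas).mpr q_int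
        simpa [Function.comp_def] using h2
      have heq : (volume.restrict (Ici s)).prod (volume : Measure ℝ)
          = (volume.prod volume).restrict (Ici s ×ˢ univ) := by
        rw [← Measure.prod_restrict, Measure.restrict_univ]
      rw [heq]
      exact (comp_int.congr (ae_of_all _ fun p => by simp [add_comm p.1 p.2])).restrict
    calc ∫ y in Ici s, Θ y
        = ∫ y in Ici s, ∫ v, (K v : ℂ) * G (v + y) := by
          exact integral_congr_ae (ae_of_all _ fun y => hsub y)
      _ = ∫ v, ∫ y in Ici s, (K v : ℂ) * G (v + y) := integral_integral_swap (by exact Hprod4)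
      _ = ∫ v, (K v : ℂ) * h (v + s) := by
          refine integral_congr_ae (ae_of_all _ fun v => ?_)
          show (∫ y in Ici s, (K v : ℂ) * G (v + y)) = (K v : ℂ) * h (v + s)
          rw [integral_const_mul]
          congr 1
          have htrans : ∫ y in Ici s, G (v + y) = ∫ x in Ici (v + s), G x := by
            rw [← integral_indicator measurableSet_Ici, ← integral_indicator measurableSet_Ici]
            have hi : ∀ y : ℝ, (Ici s).indicator (fun y => G (v + y)) y
                = (Ici (v + s)).indicator G (v + y) := by
              intro y
              simp only [indicator_apply, mem_Ici, add_le_add_iff_left]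
            simp_rw [hi]
            exact integral_add_left_eq_self (fun x => (Ici (v + s)).indicator G x) v
          rw [htrans]
          exact hkeyIci (v + s)
      _ = Ψ s := by
          have h := integral_add_right_eq_self (μ := volume) (fun x => (K (x - s) : ℂ) * h x) s
          simp only [add_sub_cancel_right] at h
          exact h
  refine ⟨claim1, claim2, ?_⟩
  calc ∫ x, (convR K f x : ℂ) * h x
      = ∫ y, (f y : ℂ) * Ψ y := hLHS
    _ = ∫ s, (f s : ℂ) * ∫ y in Ici s, Θ y := by
        refine integral_congr_ae (ae_of_all _ fun s => ?_)
        show (f s : ℂ) * Ψ s = (f s : ℂ) * ∫ y in Ici s, Θ y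
        rw [hR3 s]
    _ = ∫ y, (F y : ℂ) * Θ y := hR2.symm
    _ = ∫ x, (convR K F x : ℂ) * G x := hR1.symm
end
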